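/- Let G be a graph and F be a k-forcer connecting v ∈ V(G), where k ≥ 2. Then: (i) no induced K_{k+2} or C_4 of G contains a vertex of F; (ii) for every k-list assignment L of G there is an L-admissible color for v; and (iii) every k-list assignment L of G \ F can be extended into a k-list assignment of G in which v has a unique L-admissible color. -/

import Mathlib

variable {V : Type*}

/-- A set of vertices is monochromatic under the coloring `ρ`. -/
def Mono (ρ : V → ℕ) (W : Set V) : Prop := ∀ x ∈ W, ∀ y ∈ W, ρ x = ρ y

/-- `S` is an independent set of `G`. -/
def IndepSet (G : SimpleGraph V) (S : Set V) : Prop := ∀ x ∈ S, ∀ y ∈ S, ¬G.Adj x y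

/-- `W` is a star of `G` with center `v` (it induces a `K_{1,m}` with `m ≥ 1`). -/
def IsStarC (G : SimpleGraph V) (v : V) (W : Set V) : Prop :=
  v ∈ W ∧ (W \ {v}).Nonempty ∧ (∀ u ∈ W \ {v}, G.Adj v u) ∧ IndepSet G (W \ {v})

/-- `W` is a star of `G`. -/
def IsStar (G : SimpleGraph V) (W : Set V) : Prop := ∃ v, IsStarC G v W

/-- `W` is a maximal star of `G`. -/
def IsMaxStar (G : SimpleGraph V) (W : Set V) : Prop :=
  IsStar G W ∧ ∀ W', IsStar G W' → W ⊆ W' → W' = W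

/-- `W` is a biclique of `G` (it induces a complete bipartite graph). -/
def IsBiclique (G : SimpleGraph V) (W : Set V) : Prop :=
  ∃ S T : Set V, S.Nonempty ∧ T.Nonempty ∧ Disjoint S T ∧ S ∪ T = W ∧
    (∀ s ∈ S, ∀ t ∈ T, G.Adj s t) ∧ IndepSet G S ∧ IndepSet G T

/-- `W` is a maximal biclique of `G`. -/
def IsMaxBiclique (G : SimpleGraph V) (W : Set V) : Prop :=
  IsBiclique G W ∧ ∀ W', IsBiclique G W' → W ⊆ W' → W' = W

/-- A star coloring: no maximal star is monochromatic. -/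
def StarColoring (G : SimpleGraph V) (ρ : V → ℕ) : Prop :=
  ∀ W, IsMaxStar G W → ¬Mono ρ W

/-- A biclique coloring: no maximal biclique is monochromatic. -/
def BicliqueColoring (G : SimpleGraph V) (ρ : V → ℕ) : Prop :=
  ∀ W, IsMaxBiclique G W → ¬Mono ρ W

/-- A star `k`-coloring uses colors `{1, …, k}`. -/
def StarKColoring (G : SimpleGraph V) (k : ℕ) (ρ : V → ℕ) : Prop :=
  (∀ x, ρ x ∈ Set.Icc 1 k) ∧ StarColoring G ρ

/-- A biclique `k`-coloring uses colors `{1, …, k}`. -/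
def BicliqueKColoring (G : SimpleGraph V) (k : ℕ) (ρ : V → ℕ) : Prop :=
  (∀ x, ρ x ∈ Set.Icc 1 k) ∧ BicliqueColoring G ρ

/-- A `k`-list assignment: each vertex gets a list of exactly `k` colors. -/
def IsListAssignment (L : V → Set ℕ) (k : ℕ) : Prop := ∀ v, (L v).Finite ∧ (L v).ncard = k

/-- An `L`-coloring: each vertex gets a color from its own list. -/
def IsLColoring (L : V → Set ℕ) (ρ : V → ℕ) : Prop := ∀ v, ρ v ∈ L v

/-- `G` is star `k`-choosable. -/
def StarChoosable (G : SimpleGraph V) (k : ℕ) : Prop :=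
  ∀ L : V → Set ℕ, IsListAssignment L k → ∃ ρ, IsLColoring L ρ ∧ StarColoring G ρ

/-- `G` is biclique `k`-choosable. -/
def BicliqueChoosable (G : SimpleGraph V) (k : ℕ) : Prop :=
  ∀ L : V → Set ℕ, IsListAssignment L k → ∃ ρ, IsLColoring L ρ ∧ BicliqueColoring G ρ

/-- The star chromatic number `χ_S`. -/
noncomputable def starChromaticNumber (G : SimpleGraph V) : ℕ :=
  sInf {k | ∃ ρ, StarKColoring G k ρ}

/-- The biclique chromatic number `χ_B`. -/
noncomputable def bicliqueChromaticNumber (G : SimpleGraph V) : ℕ :=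
  sInf {k | ∃ ρ, BicliqueKColoring G k ρ}

/-- The star choice number `ch_S`. -/
noncomputable def starChoiceNumber (G : SimpleGraph V) : ℕ := sInf {k | StarChoosable G k}

/-- The biclique choice number `ch_B`. -/
noncomputable def bicliqueChoiceNumber (G : SimpleGraph V) : ℕ := sInf {k | BicliqueChoosable G k}

/-- `l` is a leaf (degree-one vertex) whose unique neighbor is `v`. -/
def IsLeafAt (G : SimpleGraph V) (l v : V) : Prop := G.neighborSet l = {v}

/-- `v` is a leafed vertex: some leaf is adjacent to it. -/
def IsLeafed (G : SimpleGraph V) (v : V) : Prop := ∃ l, IsLeafAt G l v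

/-- `S` induces a cycle `C_n` in `G`. -/
def IsInducedCycle (G : SimpleGraph V) (n : ℕ) (S : Set V) : Prop :=
  ∃ f : ZMod n → V, Function.Injective f ∧ Set.range f = S ∧
    ∀ i j : ZMod n, G.Adj (f i) (f j) ↔ (j = i + 1 ∨ i = j + 1)

/-- `S` induces a hole (chordless cycle of length at least 4) in `G`. -/
def IsHole (G : SimpleGraph V) (S : Set V) : Prop := ∃ n, 4 ≤ n ∧ IsInducedCycle G n S

/-- `S` induces a complete graph `K_m` in `G`. -/
def IsInducedComplete (G : SimpleGraph V) (m : ℕ) (S : Set V) : Prop :=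
  G.IsClique S ∧ S.Finite ∧ S.ncard = m

/-- The closed neighborhood `N[v]`. -/
def closedNbhd (G : SimpleGraph V) (v : V) : Set V := insert v (G.neighborSet v)

/-- `v` and `w` are twins: `N[v] = N[w]`. -/
def Twins (G : SimpleGraph V) (v w : V) : Prop := closedNbhd G v = closedNbhd G w

/-- `w` and `z` are twins in the subgraph of `G` induced by `A`. -/
def TwinsIn (G : SimpleGraph V) (A : Set V) (w z : V) : Prop :=
  ∀ y ∈ A, ((y = w ∨ G.Adj y w) ↔ (y = z ∨ G.Adj y z))

/-- `w` dominates `v`: `N[v] ⊆ N[w]`. -/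
def Dominates (G : SimpleGraph V) (w v : V) : Prop := closedNbhd G v ⊆ closedNbhd G w

/-- `K` is a `k`-keeper connecting `v` and `w`. -/
def IsKeeper (G : SimpleGraph V) (k : ℕ) (v w : V) (K : Set V) : Prop :=
  v ∉ K ∧ w ∉ K ∧
  ∃ (d : Fin (k - 1) → V) (C : Fin (k - 1) → Set V),
    Function.Injective d ∧
    (∀ i, (C i).Finite ∧ (C i).ncard = k) ∧
    (∀ i j, d i ∉ C j) ∧
    (∀ i j, i ≠ j → Disjoint (C i) (C j)) ∧
    K = Set.range d ∪ ⋃ i, C i ∧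
    G.IsClique (Set.range d ∪ {v, w}) ∧
    (∀ i, G.IsClique (insert (d i) (C i))) ∧
    (∀ x ∈ K, ∀ y, G.Adj x y →
      (x ∈ Set.range d ∧ y ∈ Set.range d ∪ {v, w}) ∨
      (∃ i, x ∈ insert (d i) (C i) ∧ y ∈ insert (d i) (C i)))

/-- `C` is a `k`-switcher connecting `U`. -/
def IsSwitcher (G : SimpleGraph V) (k : ℕ) (U C : Set V) : Prop :=
  Disjoint C U ∧ C.Finite ∧ C.ncard = k ∧
  (∀ u ∈ U, G.IsClique (insert u C)) ∧
  (∀ x ∈ C, ∀ y, G.Adj x y → y ∈ C ∪ U)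

/-- `S` is a long `k`-switcher connecting `W`. -/
def IsLongSwitcher (G : SimpleGraph V) (k : ℕ) (W S : Set V) : Prop :=
  ∃ (h : ℕ) (w u : ℕ → V) (C : Set V) (Q : ℕ → Set V),
    2 ≤ h ∧
    Set.InjOn w (Set.Icc 1 h) ∧ w '' Set.Icc 1 h = W ∧
    Set.InjOn u (Set.Icc 1 h) ∧
    (∀ i ∈ Set.Icc 1 h, IsLeafed G (u i)) ∧
    IndepSet G (u '' Set.Icc 1 h) ∧
    IsSwitcher G k (u '' Set.Icc 1 h) C ∧
    (∀ i ∈ Set.Icc 1 h, IsKeeper G k (w i) (u i) (Q i)) ∧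
    S = u '' Set.Icc 1 h ∪ C ∪ ⋃ i ∈ Set.Icc 1 h, Q i ∧
    Disjoint (u '' Set.Icc 1 h) C ∧
    (∀ i ∈ Set.Icc 1 h, Disjoint (u '' Set.Icc 1 h) (Q i)) ∧
    (∀ i ∈ Set.Icc 1 h, Disjoint C (Q i)) ∧
    (∀ i ∈ Set.Icc 1 h, ∀ j ∈ Set.Icc 1 h, i ≠ j → Disjoint (Q i) (Q j)) ∧
    Disjoint S W ∧
    (∀ i ∈ Set.Icc 1 h, ∀ y, G.Adj (u i) y → y ∈ C ∪ Q i ∨ IsLeafAt G y (u i))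

/-- `K` is an `ℓ`-cluster connecting `⟨s, X, −X⟩`, where `X = range x` and `−X = range mx`. -/
def IsCluster (G : SimpleGraph V) (ℓ : ℕ) (s : V) (x mx : ZMod ℓ → V) (K : Set V) : Prop :=
  2 ≤ ℓ ∧
  ∃ vc : ZMod ℓ → V,
    Function.Injective x ∧ Function.Injective mx ∧ Function.Injective vc ∧
    Set.range vc = K ∧
    Disjoint (Set.range x) (Set.range mx) ∧
    Disjoint (Set.range x) K ∧ Disjoint (Set.range mx) K ∧
    s ∉ Set.range x ∪ Set.range mx ∪ K ∧
    (∀ i, IsLeafed G (vc i)) ∧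
    (∀ i, G.Adj s (x i)) ∧ (∀ i, G.Adj s (mx i)) ∧ (∀ i, G.Adj s (vc i)) ∧
    (∀ i, G.Adj (x i) (mx i)) ∧ (∀ i, G.Adj (mx i) (vc i)) ∧ (∀ i, G.Adj (vc i) (x (i + 1))) ∧
    (∀ i j, ¬G.Adj (x i) (x j)) ∧ (∀ i j, ¬G.Adj (mx i) (mx j)) ∧
    (∀ i j, ¬G.Adj (vc i) (vc j)) ∧
    (∀ i j, G.Adj (x i) (mx j) → i = j) ∧
    (∀ i j, G.Adj (mx i) (vc j) → i = j) ∧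
    (∀ i j, G.Adj (vc i) (x j) → j = i + 1) ∧
    (∀ i, ∀ y, G.Adj (vc i) y → y = s ∨ y = mx i ∨ y = x (i + 1) ∨ IsLeafAt G y (vc i))

/-- `S` is a list switcher connecting `W`. -/
def IsListSwitcher (G : SimpleGraph V) (W S : Set V) : Prop :=
  ∃ (h : ℕ) (w u : ℕ → V) (C : Set V),
    2 ≤ h ∧
    Set.InjOn w (Set.Icc 1 h) ∧ w '' Set.Icc 1 h = W ∧
    Set.InjOn u (Set.Icc 1 h) ∧
    IndepSet G (u '' Set.Icc 1 h) ∧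
    IsSwitcher G 2 (u '' Set.Icc 1 h) C ∧
    S = u '' Set.Icc 1 h ∪ C ∧
    Disjoint (u '' Set.Icc 1 h) C ∧
    Disjoint S W ∧
    (∀ i ∈ Set.Icc 1 h, G.Adj (w i) (u i)) ∧
    (∀ i ∈ Set.Icc 1 h, ∀ y, G.Adj (u i) y → y ∈ C ∨ y = w i)

/-- `F` is a `k`-forcer connecting `v`. -/
def IsForcer (G : SimpleGraph V) (k : ℕ) (v : V) (F : Set V) : Prop :=
  ∃ (A B : Set V) (C : V → V → Set V),
    A.Finite ∧ A.ncard = k - 1 ∧ B.Finite ∧ B.ncard = k ^ k - 1 ∧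
    (∀ a ∈ A, IsLeafed G a) ∧ (∀ b ∈ B, IsLeafed G b) ∧
    v ∉ A ∧ v ∉ B ∧ Disjoint A B ∧
    (∀ a ∈ insert v A, ∀ b ∈ B, ¬G.Adj a b ∧ IsSwitcher G k {a, b} (C a b)) ∧
    (∀ a ∈ insert v A, ∀ b ∈ B, ∀ a' ∈ insert v A, ∀ b' ∈ B,
      (a ≠ a' ∨ b ≠ b') → Disjoint (C a b) (C a' b')) ∧
    (∀ a ∈ insert v A, ∀ b ∈ B, Disjoint (C a b) (insert v (A ∪ B))) ∧
    F = A ∪ B ∪ ⋃ a ∈ insert v A, ⋃ b ∈ B, C a b ∧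
    (∀ x ∈ A ∪ B, ∀ y, G.Adj x y →
      (∃ a ∈ insert v A, ∃ b ∈ B, (x = a ∨ x = b) ∧ y ∈ C a b) ∨ IsLeafAt G y x)

/-- Given a `k`-forcer `F` connecting `v` and a list assignment `L`, the color `c` is
`L`-admissible for `v`. -/
def LAdmissible (G : SimpleGraph V) (F : Set V) (L : V → Set ℕ) (v : V) (c : ℕ) : Prop :=
  c ∈ L v ∧ ∃ ρ : V → ℕ, IsLColoring L ρ ∧ ρ v = c ∧
    ∀ f ∈ F, ∀ W, IsMaxStar G W → IsStarC G f W → ¬Mono ρ W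

/-- The vertices `a, b, c, d` induce a diamond with universal vertices `a, b`. -/
def IsInducedDiamond (G : SimpleGraph V) (a b c d : V) : Prop :=
  a ≠ b ∧ a ≠ c ∧ a ≠ d ∧ b ≠ c ∧ b ≠ d ∧ c ≠ d ∧
  G.Adj a b ∧ G.Adj a c ∧ G.Adj a d ∧ G.Adj b c ∧ G.Adj b d ∧ ¬G.Adj c d

/-- `G` contains an induced 4-wheel `W_4`. -/
def HasInducedW4 (G : SimpleGraph V) : Prop :=
  ∃ u a b c d : V, [u, a, b, c, d].Pairwise (· ≠ ·) ∧
    G.Adj u a ∧ G.Adj u b ∧ G.Adj u c ∧ G.Adj u d ∧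
    G.Adj a b ∧ G.Adj b c ∧ G.Adj c d ∧ G.Adj d a ∧ ¬G.Adj a c ∧ ¬G.Adj b d

/-- `G` contains an induced dart. -/
def HasInducedDart (G : SimpleGraph V) : Prop :=
  ∃ a b c d e : V, [a, b, c, d, e].Pairwise (· ≠ ·) ∧
    IsInducedDiamond G a b c d ∧ G.Adj a e ∧ ¬G.Adj b e ∧ ¬G.Adj c e ∧ ¬G.Adj d e

/-- `G` contains an induced gem. -/
def HasInducedGem (G : SimpleGraph V) : Prop :=
  ∃ u p₁ p₂ p₃ p₄ : V, [u, p₁, p₂, p₃, p₄].Pairwise (· ≠ ·) ∧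
    G.Adj u p₁ ∧ G.Adj u p₂ ∧ G.Adj u p₃ ∧ G.Adj u p₄ ∧
    G.Adj p₁ p₂ ∧ G.Adj p₂ p₃ ∧ G.Adj p₃ p₄ ∧ ¬G.Adj p₁ p₃ ∧ ¬G.Adj p₁ p₄ ∧ ¬G.Adj p₂ p₄

/-- `v` is block separable. -/
def BlockSeparable (G : SimpleGraph V) (v : V) : Prop :=
  ∀ w ∈ G.neighborSet v, ∀ z ∈ G.neighborSet v, G.Adj w z →
    ¬Dominates G w v → ¬Dominates G z v → TwinsIn G (closedNbhd G v) w z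

/-- `B` is a block (a maximal set of pairwise twins) of the subgraph of `G` induced by `A`. -/
def IsBlockOf (G : SimpleGraph V) (A B : Set V) : Prop :=
  B ⊆ A ∧ B.Nonempty ∧ (∀ p ∈ B, ∀ q ∈ B, TwinsIn G A p q) ∧
  ∀ B', B' ⊆ A → (∀ p ∈ B', ∀ q ∈ B', TwinsIn G A p q) → B ⊆ B' → B' = B

/-- `B` is a block of `G`. -/
def IsBlock (G : SimpleGraph V) (B : Set V) : Prop := IsBlockOf G Set.univ B

/-- `B 0, …, B ℓ` is the block separation of `v`. -/
def IsBlockSeparation (G : SimpleGraph V) (v : V) (ℓ : ℕ) (B : ℕ → Set V) : Prop :=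
  v ∈ B 0 ∧
  (∀ i ≤ ℓ, IsBlockOf G (closedNbhd G v) (B i)) ∧
  (∀ i ≤ ℓ, ∀ j ≤ ℓ, i ≠ j → Disjoint (B i) (B j)) ∧
  (⋃ i ∈ Set.Iic ℓ, B i) = closedNbhd G v ∧
  (∀ i, 1 ≤ i → i ≤ ℓ → ∀ j, 1 ≤ j → j ≤ ℓ → i ≠ j → ∀ a ∈ B i, ∀ b ∈ B j, ¬G.Adj a b)

/-- `S` is a diamond `k`-switcher connecting `U`. -/
def IsDiamondSwitcher (G : SimpleGraph V) (k : ℕ) (U S : Set V) : Prop :=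
  ∃ (h : ℕ) (u w : ℕ → V) (Q : ℕ → Set V) (C : Set V),
    2 ≤ h ∧
    Set.InjOn u (Set.Icc 1 h) ∧ u '' Set.Icc 1 h = U ∧
    Set.InjOn w (Set.Icc 1 h) ∧
    (∀ i, 2 ≤ i → i ≤ h → IsLeafed G (w i)) ∧
    C.Finite ∧ C.ncard = k ∧
    G.IsClique (insert (w 1) C) ∧
    (∀ i, 2 ≤ i → i ≤ h → G.Adj (w 1) (w i)) ∧
    (∀ i j, 2 ≤ i → i ≤ h → 2 ≤ j → j ≤ h → ¬G.Adj (w i) (w j)) ∧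
    (∀ i ∈ Set.Icc 1 h, IsKeeper G k (u i) (w i) (Q i)) ∧
    S = w '' Set.Icc 1 h ∪ C ∪ ⋃ i ∈ Set.Icc 1 h, Q i ∧
    Disjoint (w '' Set.Icc 1 h) C ∧
    (∀ i ∈ Set.Icc 1 h, Disjoint (w '' Set.Icc 1 h) (Q i)) ∧
    (∀ i ∈ Set.Icc 1 h, Disjoint C (Q i)) ∧
    (∀ i ∈ Set.Icc 1 h, ∀ j ∈ Set.Icc 1 h, i ≠ j → Disjoint (Q i) (Q j)) ∧
    Disjoint S U ∧
    (∀ y, G.Adj (w 1) y → y ∈ C ∨ (∃ i, 2 ≤ i ∧ i ≤ h ∧ y = w i) ∨ y ∈ Q 1) ∧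
    (∀ i, 2 ≤ i → i ≤ h → ∀ y, G.Adj (w i) y → y = w 1 ∨ y ∈ Q i ∨ IsLeafAt G y (w i)) ∧
    (∀ x ∈ C, ∀ y, G.Adj x y → y ∈ C ∨ y = w 1)

/-- `S` is a split `k`-switcher connecting `W`, with respect to the split partition
`(Sg, Qg)` of `G`. -/
def IsSplitSwitcher (G : SimpleGraph V) (Sg Qg : Set V) (k : ℕ) (W S : Set V) : Prop :=
  ∃ (X Y : Set V) (a₁ a₂ : V),
    X ⊆ Qg ∧ Y ⊆ Qg ∧ a₁ ∈ Sg ∧ a₂ ∈ Sg ∧ a₁ ≠ a₂ ∧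
    X.Finite ∧ X.ncard = k ∧ Y.Finite ∧ Y.ncard = k ∧ Disjoint X Y ∧
    a₁ ∉ X ∪ Y ∧ a₂ ∉ X ∪ Y ∧
    S = X ∪ Y ∪ {a₁, a₂} ∧ Disjoint S W ∧
    (∀ v ∈ W ∪ {a₁, a₂}, G.IsClique (insert v X)) ∧
    G.IsClique (insert a₁ Y) ∧ G.IsClique (insert a₂ Y) ∧
    (∀ x ∈ X ∪ Y, ∀ y ∈ Sg, G.Adj x y →
      ((x ∈ X ∧ (y ∈ W ∨ y = a₁ ∨ y = a₂)) ∨ (x ∈ Y ∧ (y = a₁ ∨ y = a₂)))) ∧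
    (∀ y, G.Adj a₁ y → y ∈ X ∪ Y) ∧
    (∀ y, G.Adj a₂ y → y ∈ X ∪ Y)

/-- `G` together with the vertex partition `QB 1, …, QB (r+1), SB 1, …, SB r` realizes the
threshold representation `(q, s)`. -/
def IsThresholdRealization (G : SimpleGraph V) (r : ℕ) (q s : ℕ → ℕ)
    (QB SB : ℕ → Set V) : Prop :=
  (∀ i ∈ Set.Icc 1 (r + 1), (QB i).Finite ∧ (QB i).ncard = q i) ∧
  (∀ i ∈ Set.Icc 1 r, (SB i).Finite ∧ (SB i).ncard = s i) ∧
  (∀ i ∈ Set.Icc 1 (r + 1), ∀ j ∈ Set.Icc 1 (r + 1), i ≠ j → Disjoint (QB i) (QB j)) ∧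
  (∀ i ∈ Set.Icc 1 r, ∀ j ∈ Set.Icc 1 r, i ≠ j → Disjoint (SB i) (SB j)) ∧
  (∀ i ∈ Set.Icc 1 (r + 1), ∀ j ∈ Set.Icc 1 r, Disjoint (QB i) (SB j)) ∧
  ((⋃ i ∈ Set.Icc 1 (r + 1), QB i) ∪ ⋃ i ∈ Set.Icc 1 r, SB i) = Set.univ ∧
  (∀ a b : V, G.Adj a b ↔ a ≠ b ∧
    ((∃ i ∈ Set.Icc 1 (r + 1), ∃ j ∈ Set.Icc 1 (r + 1),
        ((a ∈ QB i ∧ b ∈ QB j) ∨ (b ∈ QB i ∧ a ∈ QB j))) ∨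
     (∃ i ∈ Set.Icc 1 r, ∃ j ∈ Set.Icc 1 r, i ≤ j ∧
        ((a ∈ QB i ∧ b ∈ SB j) ∨ (b ∈ QB i ∧ a ∈ SB j)))))

/-- The index `i` of `Q` is `k`-forbidden for the threshold representation `(q, s)`. -/
def KForbiddenIndex (k r : ℕ) (q s : ℕ → ℕ) (i : ℕ) : Prop :=
  k < q i ∨ (q i = k ∧ ∃ j, i < j ∧ j ≤ r + 1 ∧ q j = k ∧
    (∀ h, i < h → h < j → q h = k - 1) ∧ ∀ h, i ≤ h → h < j → s h = 1)

/-- `G` realizes the netblock representation `(T, wt)`, where `VT` is the vertex set of the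
tree `T` and `B v w` is the clique inserted for the tree edge `vw`. -/
def IsNetblockRealization (G T : SimpleGraph V) (VT : Set V)
    (wt : V → V → ℕ) (B : V → V → Set V) : Prop :=
  (∀ v w, T.Adj v w → v ∈ VT ∧ w ∈ VT) ∧
  (T.induce VT).IsTree ∧
  (∀ v w, wt v w = wt w v) ∧
  (∀ v w, B v w = B w v) ∧
  (∀ v w, T.Adj v w → (B v w).Finite ∧ (B v w).ncard = wt v w) ∧
  (∀ v w, T.Adj v w → Disjoint (B v w) VT) ∧
  (∀ v w v' w', T.Adj v w → T.Adj v' w' → ¬(v = v' ∧ w = w') → ¬(v = w' ∧ w = v') →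
    Disjoint (B v w) (B v' w')) ∧
  {a | a ∈ VT ∨ ∃ v w, T.Adj v w ∧ a ∈ B v w} = Set.univ ∧
  (∀ a b, G.Adj a b ↔ a ≠ b ∧ ∃ v w, T.Adj v w ∧
    a ∈ insert v (insert w (B v w)) ∧ b ∈ insert v (insert w (B v w)))

/-- `R` is the vertex set of a `k`-subtree of the netblock representation `(T, wt)`. -/
def IsKSubtree (T : SimpleGraph V) (VT : Set V) (wt : V → V → ℕ) (k : ℕ) (R : Set V) : Prop :=
  R ⊆ VT ∧ R.Nonempty ∧ (T.induce R).Connected ∧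
  ∀ v ∈ R, ∀ w ∈ R, T.Adj v w → wt v w = k

/-- `R` is the vertex set of a maximal `k`-subtree of `(T, wt)`: its edge set is not properly
included in the edge set of another `k`-subtree. -/
def IsMaxKSubtree (T : SimpleGraph V) (VT : Set V) (wt : V → V → ℕ) (k : ℕ) (R : Set V) :
    Prop :=
  IsKSubtree T VT wt k R ∧
  ∀ R', IsKSubtree T VT wt k R' →
    (∀ v ∈ R, ∀ w ∈ R, T.Adj v w → v ∈ R' ∧ w ∈ R') →
    (∀ v ∈ R', ∀ w ∈ R', T.Adj v w → v ∈ R ∧ w ∈ R)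

/-- `v` is a `k`-exit vertex of `(T, wt)`. -/
def IsExitVertex (T : SimpleGraph V) (wt : V → V → ℕ) (k : ℕ) (v : V) : Prop :=
  ∃ w, T.Adj v w ∧ wt v w < k

section Aux
variable {G : SimpleGraph V}

lemma IsLeafAt.adj {l f : V} (h : IsLeafAt G l f) : G.Adj l f := by
  have : f ∈ G.neighborSet l := by rw [h]; rfl
  exact this

lemma IsLeafAt.eq_of_adj {l f y : V} (h : IsLeafAt G l f) (hy : G.Adj l y) : y = f := by
  have : y ∈ G.neighborSet l := hy
  rwa [h, Set.mem_singleton_iff] at this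

lemma not_leaf_of_two_adj {x y z : V} (hyz : y ≠ z) (hy : G.Adj x y) (hz : G.Adj x z) :
    ∀ f, ¬ IsLeafAt G x f := by
  intro f hf
  exact hyz ((hf.eq_of_adj hy).trans (hf.eq_of_adj hz).symm)

/-- STAR1: every maximal star centered at `f` contains each leaf at `f`. -/
lemma leaf_mem_maxStar {l f : V} {W : Set V} (hl : IsLeafAt G l f)
    (hmax : IsMaxStar G W) (hc : IsStarC G f W) : l ∈ W := by
  by_contra hlW
  have hlf : l ≠ f := G.ne_of_adj hl.adj
  have hstar : IsStar G (insert l W) := by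
    refine ⟨f, Set.mem_insert_of_mem _ hc.1, ⟨l, by simp [hlf]⟩, ?_, ?_⟩
    · rintro u ⟨hu, hu'⟩
      rcases hu with rfl | hu
      · exact hl.adj.symm
      · exact hc.2.2.1 u ⟨hu, hu'⟩
    · rintro x ⟨hx, hx'⟩ y ⟨hy, hy'⟩ hadj
      rcases Set.mem_insert_iff.1 hx with h1 | h1
      · subst h1; exact hy' (hl.eq_of_adj hadj)
      · rcases Set.mem_insert_iff.1 hy with h2 | h2
        · subst h2; exact hx' (hl.eq_of_adj hadj.symm)
        · exact hc.2.2.2 x ⟨h1, hx'⟩ y ⟨h2, hy'⟩ hadj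
  have := hmax.2 _ hstar (Set.subset_insert _ _)
  exact hlW (this ▸ Set.mem_insert l W)

section Switcher

variable {a b c c' : V} {Cs : Set V}

/-- Every vertex of `Cs ∪ {a,b}` other than `c` is adjacent to `c ∈ Cs`. -/
lemma sw_adj_all (hd : Disjoint Cs {a, b})
    (hca : G.IsClique (insert a Cs)) (hcb : G.IsClique (insert b Cs))
    (hc : c ∈ Cs) : ∀ y ∈ Cs ∪ {a, b}, y ≠ c → G.Adj c y := by
  intro y hy hyc
  rcases hy with hy | hy
  · exact hca (Set.mem_insert_of_mem _ hc) (Set.mem_insert_of_mem _ hy) (fun h => hyc h.symm)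
  · rcases hy with rfl | rfl
    · exact (hca (Set.mem_insert _ _) (Set.mem_insert_of_mem _ hc) hyc).symm
    · exact (hcb (Set.mem_insert _ _) (Set.mem_insert_of_mem _ hc) hyc).symm

lemma sw_a_not_mem (hd : Disjoint Cs {a, b}) : a ∉ Cs :=
  fun h => Set.disjoint_left.1 hd h (Set.mem_insert _ _)

lemma sw_b_not_mem (hd : Disjoint Cs {a, b}) : b ∉ Cs :=
  fun h => Set.disjoint_left.1 hd h (Set.mem_insert_of_mem _ rfl)

/-- `{c, c'}` is a maximal star for distinct `c, c'` in the switcher clique. -/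
lemma sw_maxStar_pair (hd : Disjoint Cs {a, b})
    (hca : G.IsClique (insert a Cs)) (hcb : G.IsClique (insert b Cs))
    (hclo : ∀ x ∈ Cs, ∀ y, G.Adj x y → y ∈ Cs ∪ {a, b})
    (hc : c ∈ Cs) (hc' : c' ∈ Cs) (hne : c' ≠ c) :
    IsMaxStar G {c, c'} ∧ IsStarC G c {c, c'} := by
  have hadj : G.Adj c c' := sw_adj_all hd hca hcb hc c' (Or.inl hc') hne
  have hdiff : ({c, c'} : Set V) \ {c} = {c'} := by
    ext z; simp only [Set.mem_diff, Set.mem_insert_iff, Set.mem_singleton_iff]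
    constructor
    · rintro ⟨rfl | rfl, hz⟩; · exact absurd rfl hz
      · rfl
    · rintro rfl; exact ⟨Or.inr rfl, hne⟩
  have hstar : IsStarC G c {c, c'} := by
    refine ⟨Set.mem_insert _ _, ?_, ?_, ?_⟩
    · rw [hdiff]; exact ⟨c', rfl⟩
    · rw [hdiff]; rintro u rfl; exact hadj
    · rw [hdiff]; rintro x rfl y rfl; exact G.irrefl
  refine ⟨⟨⟨c, hstar⟩, ?_⟩, hstar⟩
  rintro W' ⟨p, hp, hpne, hpadj, hpind⟩ hsub
  refine Set.Subset.antisymm ?_ hsub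
  intro z hz
  by_contra hzW
  simp only [Set.mem_insert_iff, Set.mem_singleton_iff, not_or] at hzW
  obtain ⟨hzc, hzc'⟩ := hzW
  have hcW : c ∈ W' := hsub (Set.mem_insert _ _)
  have hc'W : c' ∈ W' := hsub (Set.mem_insert_of_mem _ rfl)
  rcases eq_or_ne p c with rfl | hpc
  · -- center c : leaves c', z independent, but z ∈ N(c) all adjacent to c'
    have hzadj : G.Adj p z := hpadj z ⟨hz, hzc⟩
    have hzmem : z ∈ Cs ∪ {a, b} := hclo p hc z hzadj
    have : G.Adj z c' := (sw_adj_all hd hca hcb hc' z hzmem hzc').symm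
    exact hpind z ⟨hz, hzc⟩ c' ⟨hc'W, hne⟩ this
  rcases eq_or_ne p c' with rfl | hpc'
  · have hzadj : G.Adj p z := hpadj z ⟨hz, hzc'⟩
    have hzmem : z ∈ Cs ∪ {a, b} := hclo p hc' z hzadj
    have : G.Adj z c := (sw_adj_all hd hca hcb hc z hzmem hzc).symm
    exact hpind z ⟨hz, hzc'⟩ c ⟨hcW, Ne.symm hpc⟩ this
  · exact hpind c ⟨hcW, Ne.symm hpc⟩ c' ⟨hc'W, Ne.symm hpc'⟩ hadj

/-- `{c, a, b}` is a maximal star centered at `c`. -/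
lemma sw_maxStar_triple (hne : a ≠ b) (hab : ¬G.Adj a b) (hd : Disjoint Cs {a, b})
    (hca : G.IsClique (insert a Cs)) (hcb : G.IsClique (insert b Cs))
    (hclo : ∀ x ∈ Cs, ∀ y, G.Adj x y → y ∈ Cs ∪ {a, b})
    (hc : c ∈ Cs) :
    IsMaxStar G {c, a, b} ∧ IsStarC G c {c, a, b} := by
  have haC : a ∉ Cs := sw_a_not_mem hd
  have hbC : b ∉ Cs := sw_b_not_mem hd
  have hac : a ≠ c := fun h => haC (h ▸ hc)
  have hbc : b ≠ c := fun h => hbC (h ▸ hc)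
  have hadja : G.Adj c a := sw_adj_all hd hca hcb hc a (Or.inr (Set.mem_insert _ _)) hac
  have hadjb : G.Adj c b := sw_adj_all hd hca hcb hc b (Or.inr (Set.mem_insert_of_mem _ rfl)) hbc
  have hdiff : ({c, a, b} : Set V) \ {c} = {a, b} := by
    ext z; simp only [Set.mem_diff, Set.mem_insert_iff, Set.mem_singleton_iff]
    constructor
    · rintro ⟨rfl | h, hz⟩; · exact absurd rfl hz
      · exact h
    · rintro (rfl | rfl)
      · exact ⟨Or.inr (Or.inl rfl), hac⟩
      · exact ⟨Or.inr (Or.inr rfl), hbc⟩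
  have hstar : IsStarC G c {c, a, b} := by
    refine ⟨Set.mem_insert _ _, ?_, ?_, ?_⟩
    · rw [hdiff]; exact ⟨a, Set.mem_insert _ _⟩
    · rw [hdiff]; rintro u (rfl | rfl); exacts [hadja, hadjb]
    · rw [hdiff]; rintro x (rfl | rfl) y (rfl | rfl) h
      exacts [absurd h G.irrefl, hab h, hab h.symm, absurd h G.irrefl]
  refine ⟨⟨⟨c, hstar⟩, ?_⟩, hstar⟩
  rintro W' ⟨p, hp, hpne, hpadj, hpind⟩ hsub
  refine Set.Subset.antisymm ?_ hsub
  intro z hz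
  by_contra hzW
  simp only [Set.mem_insert_iff, Set.mem_singleton_iff, not_or] at hzW
  obtain ⟨hzc, hza, hzb⟩ := hzW
  have hcW : c ∈ W' := hsub (Set.mem_insert _ _)
  have haW : a ∈ W' := hsub (Set.mem_insert_of_mem _ (Set.mem_insert _ _))
  have hbW : b ∈ W' := hsub (Set.mem_insert_of_mem _ (Set.mem_insert_of_mem _ rfl))
  rcases eq_or_ne p c with rfl | hpc
  · have hzadj : G.Adj p z := hpadj z ⟨hz, hzc⟩
    have hzmem : z ∈ Cs ∪ {a, b} := hclo p hc z hzadj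
    rcases hzmem with hzm | hzm
    · exact hpind z ⟨hz, hzc⟩ a ⟨haW, hac⟩
        ((sw_adj_all hd hca hcb hzm a (Or.inr (Set.mem_insert _ _))
          (fun h => haC (h ▸ hzm))))
    · rcases hzm with rfl | rfl
      · exact hza rfl
      · exact hzb rfl
  rcases eq_or_ne p a with rfl | hpa
  · exact hab (hpadj b ⟨hbW, Ne.symm hne⟩)
  rcases eq_or_ne p b with rfl | hpb
  · exact hab (hpadj a ⟨haW, hne⟩).symm
  · exact hpind c ⟨hcW, Ne.symm hpc⟩ a ⟨haW, Ne.symm hpa⟩ hadja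

/-- Classification of maximal stars centered at a switcher vertex. -/
lemma sw_star_classify (hne : a ≠ b) (hab : ¬G.Adj a b) (hd : Disjoint Cs {a, b})
    (hca : G.IsClique (insert a Cs)) (hcb : G.IsClique (insert b Cs))
    (hclo : ∀ x ∈ Cs, ∀ y, G.Adj x y → y ∈ Cs ∪ {a, b})
    (hc : c ∈ Cs) {W : Set V} (hmax : IsMaxStar G W) (hstar : IsStarC G c W) :
    (∃ c' ∈ Cs, c' ≠ c ∧ W = {c, c'}) ∨ W = {c, a, b} := by
  have haC : a ∉ Cs := sw_a_not_mem hd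
  have hbC : b ∉ Cs := sw_b_not_mem hd
  have hac : a ≠ c := fun h => haC (h ▸ hc)
  have hbc : b ≠ c := fun h => hbC (h ▸ hc)
  obtain ⟨hcW, hWne, hWadj, hWind⟩ := hstar
  have hnbr : ∀ z ∈ W \ {c}, z ∈ Cs ∪ {a, b} := by
    intro z hz
    exact hclo c hc z (hWadj z hz)
  by_cases hCs : ∃ c' ∈ Cs, c' ≠ c ∧ c' ∈ W
  · obtain ⟨c', hc'Cs, hc'c, hc'W⟩ := hCs
    left
    refine ⟨c', hc'Cs, hc'c, ?_⟩
    apply Set.Subset.antisymm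
    · intro z hz
      rcases eq_or_ne z c with rfl | hzc
      · exact Set.mem_insert _ _
      rcases eq_or_ne z c' with rfl | hzc'
      · exact Set.mem_insert_of_mem _ rfl
      exfalso
      have hzm : z ∈ Cs ∪ {a, b} := hnbr z ⟨hz, hzc⟩
      exact hWind z ⟨hz, hzc⟩ c' ⟨hc'W, hc'c⟩
        (sw_adj_all hd hca hcb hc'Cs z hzm hzc').symm
    · rintro z (rfl | rfl)
      exacts [hcW, hc'W]
  · right
    push_neg at hCs
    have hWab : W ⊆ {c, a, b} := by
      intro z hz
      rcases eq_or_ne z c with rfl | hzc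
      · exact Set.mem_insert _ _
      rcases hnbr z ⟨hz, hzc⟩ with hzm | hzm
      · exact absurd hz (hCs z hzm hzc)
      · exact Set.mem_insert_of_mem _ hzm
    -- show a ∈ W and b ∈ W by maximality
    have haW : a ∈ W := by
      by_contra haW
      have hstar' : IsStar G (insert a W) := by
        refine ⟨c, Set.mem_insert_of_mem _ hcW, ?_, ?_, ?_⟩
        · obtain ⟨u, hu⟩ := hWne
          exact ⟨u, Set.mem_insert_of_mem _ hu.1, hu.2⟩
        · rintro u ⟨hu, hu'⟩
          rcases Set.mem_insert_iff.1 hu with rfl | hu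
          · exact sw_adj_all hd hca hcb hc u (Or.inr (Set.mem_insert _ _)) hac
          · exact hWadj u ⟨hu, hu'⟩
        · rintro x ⟨hx, hx'⟩ y ⟨hy, hy'⟩ hadj
          rcases Set.mem_insert_iff.1 hx with hxa | hxW
          · rcases Set.mem_insert_iff.1 hy with hya | hyW
            · exact absurd (hya ▸ hxa ▸ hadj) G.irrefl
            · rcases hWab hyW with h | h | h
              · exact hy' h
              · exact absurd (h ▸ hxa ▸ hadj) G.irrefl
              · exact hab (h ▸ hxa ▸ hadj)
          · rcases Set.mem_insert_iff.1 hy with hya | hyW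
            · rcases hWab hxW with h | h | h
              · exact hx' h
              · exact absurd (h ▸ hya ▸ hadj) G.irrefl
              · exact hab (h ▸ hya ▸ hadj).symm
            · exact hWind x ⟨hxW, hx'⟩ y ⟨hyW, hy'⟩ hadj
      have := hmax.2 _ hstar' (Set.subset_insert _ _)
      exact haW (this ▸ Set.mem_insert a W)
    have hbW : b ∈ W := by
      by_contra hbW
      have hstar' : IsStar G (insert b W) := by
        refine ⟨c, Set.mem_insert_of_mem _ hcW, ?_, ?_, ?_⟩
        · obtain ⟨u, hu⟩ := hWne
          exact ⟨u, Set.mem_insert_of_mem _ hu.1, hu.2⟩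
        · rintro u ⟨hu, hu'⟩
          rcases Set.mem_insert_iff.1 hu with rfl | hu
          · exact sw_adj_all hd hca hcb hc u (Or.inr (Set.mem_insert_of_mem _ rfl)) hbc
          · exact hWadj u ⟨hu, hu'⟩
        · rintro x ⟨hx, hx'⟩ y ⟨hy, hy'⟩ hadj
          rcases Set.mem_insert_iff.1 hx with hxb | hxW
          · rcases Set.mem_insert_iff.1 hy with hyb | hyW
            · exact absurd (hyb ▸ hxb ▸ hadj) G.irrefl
            · rcases hWab hyW with h | h | h
              · exact hy' h
              · exact hab (h ▸ hxb ▸ hadj).symm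
              · exact absurd (h ▸ hxb ▸ hadj) G.irrefl
          · rcases Set.mem_insert_iff.1 hy with hyb | hyW
            · rcases hWab hxW with h | h | h
              · exact hx' h
              · exact hab (h ▸ hyb ▸ hadj)
              · exact absurd (h ▸ hyb ▸ hadj) G.irrefl
            · exact hWind x ⟨hxW, hx'⟩ y ⟨hyW, hy'⟩ hadj
      have := hmax.2 _ hstar' (Set.subset_insert _ _)
      exact hbW (this ▸ Set.mem_insert b W)
    apply Set.Subset.antisymm hWab
    rintro z (rfl | rfl | rfl)
    exacts [hcW, haW, hbW]

end Switcher

/-- Hall-type system of distinct representatives. -/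
lemma exists_sdr {Cs : Set V} {L : V → Set ℕ} {k : ℕ}
    (hCf : Cs.Finite) (hCc : Cs.ncard ≤ k)
    (hLp : ∀ c ∈ Cs, (L c).Finite ∧ k ≤ (L c).ncard) :
    ∃ σ : V → ℕ, Set.InjOn σ Cs ∧ ∀ c ∈ Cs, σ c ∈ L c := by
  classical
  haveI : Fintype Cs := hCf.fintype
  set t : Cs → Finset ℕ := fun c => (hLp c c.2).1.toFinset with ht
  have hhall : ∀ s : Finset Cs, s.card ≤ (s.biUnion t).card := by
    intro s
    rcases s.eq_empty_or_nonempty with rfl | ⟨c, hc⟩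
    · simp
    · have h1 : t c ⊆ s.biUnion t := Finset.subset_biUnion_of_mem t hc
      have h2 : k ≤ (t c).card := by
        rw [ht]
        have := (hLp c c.2).2
        rwa [Set.ncard_eq_toFinset_card _ (hLp c c.2).1] at this
      have h3 : s.card ≤ Fintype.card Cs := Finset.card_le_univ s
      have h4 : Fintype.card Cs ≤ k := by
        rw [← Nat.card_eq_fintype_card, Nat.card_coe_set_eq]
        exact hCc
      exact le_trans (le_trans h3 h4) (le_trans h2 (Finset.card_le_card h1))
  obtain ⟨f, hfinj, hfm⟩ := (Finset.all_card_le_biUnion_card_iff_exists_injective t).1 hhall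
  refine ⟨fun x => if h : x ∈ Cs then f ⟨x, h⟩ else 0, ?_, ?_⟩
  · intro x hx y hy hxy
    simp only [dif_pos hx, dif_pos hy] at hxy
    exact Subtype.ext_iff.1 (hfinj hxy)
  · intro c hc
    simp only [dif_pos hc]
    have := hfm ⟨c, hc⟩
    rw [ht] at this
    simpa [Set.Finite.mem_toFinset] using this

/-- The finset of list-respecting tuples supported on `s`. -/
lemma exists_tuple_finset {k : ℕ} (s : Finset V) (t : V → Finset ℕ)
    (hc : ∀ a ∈ s, (t a).card = k) :
    ∃ TF : Finset (V → ℕ), TF.card = k ^ s.card ∧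
      ∀ ψ : V → ℕ, (ψ ∈ TF ↔ (∀ a ∈ s, ψ a ∈ t a) ∧ ∀ x, x ∉ s → ψ x = 0) := by
  classical
  refine ⟨(s.pi t).image (fun p x => if h : x ∈ s then p x h else 0), ?_, ?_⟩
  · rw [Finset.card_image_of_injOn, Finset.card_pi]
    · rw [Finset.prod_congr rfl hc, Finset.prod_const]
    · intro p hp q hq hpq
      funext a ha
      have := congrFun hpq a
      simpa [ha] using this
  · intro ψ
    constructor
    · rintro hm
      obtain ⟨p, hp, rfl⟩ := Finset.mem_image.1 hm
      rw [Finset.mem_pi] at hp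
      refine ⟨fun a ha => ?_, fun x hx => ?_⟩
      · simpa [ha] using hp a ha
      · simp [hx]
    · rintro ⟨h1, h2⟩
      refine Finset.mem_image.2 ⟨fun a _ => ψ a, ?_, ?_⟩
      · rw [Finset.mem_pi]; exact fun a ha => h1 a ha
      · funext x
        by_cases hx : x ∈ s
        · simp [hx]
        · simp [hx, h2 x hx]

/-- The workhorse: a tuple on `{v} ∪ A` that every `b ∈ B` can answer yields an
admissible color. -/
lemma admissible_of_tuple (G : SimpleGraph V) (k : ℕ) (hk : 2 ≤ k) (v : V)
    (A B : Set V) (C : V → V → Set V) (F : Set V)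
    (hAleafed : ∀ a ∈ A, IsLeafed G a) (hBleafed : ∀ b ∈ B, IsLeafed G b)
    (hvB : v ∉ B) (hABdisj : Disjoint A B)
    (hBne : B.Nonempty)
    (hsw : ∀ a ∈ insert v A, ∀ b ∈ B, ¬G.Adj a b ∧ IsSwitcher G k {a, b} (C a b))
    (hCdisj : ∀ a ∈ insert v A, ∀ b ∈ B, ∀ a' ∈ insert v A, ∀ b' ∈ B,
      (a ≠ a' ∨ b ≠ b') → Disjoint (C a b) (C a' b'))
    (hCav : ∀ a ∈ insert v A, ∀ b ∈ B, Disjoint (C a b) (insert v (A ∪ B)))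
    (hFdef : F = A ∪ B ∪ ⋃ a ∈ insert v A, ⋃ b ∈ B, C a b)
    (L : V → Set ℕ) (hL : IsListAssignment L k)
    (φ : V → ℕ) (hφ : ∀ a ∈ insert v A, φ a ∈ L a)
    (hgood : ∀ b ∈ B, ∃ γ ∈ L b, ∀ a ∈ insert v A,
      ∃ σ : V → ℕ, Set.InjOn σ (C a b) ∧ (∀ c ∈ C a b, σ c ∈ L c) ∧
        (φ a = γ → ∀ c ∈ C a b, σ c ≠ γ)) :
    LAdmissible G F L v (φ v) := by
  classical
  set A' : Set V := insert v A with hA'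
  have hvA' : v ∈ A' := Set.mem_insert _ _
  -- basic distinctness
  have hne_ab : ∀ a ∈ A', ∀ b ∈ B, a ≠ b := by
    rintro a (rfl | ha) b hb
    · exact fun h => hvB (h ▸ hb)
    · exact fun h => (Set.disjoint_left.1 hABdisj ha) (h ▸ hb)
  -- switcher components
  have hswd := fun a ha b hb => ((hsw a ha b hb).2 : IsSwitcher G k {a, b} (C a b))
  have hCd : ∀ a ∈ A', ∀ b ∈ B, Disjoint (C a b) {a, b} := fun a ha b hb => (hswd a ha b hb).1
  have hCfin : ∀ a ∈ A', ∀ b ∈ B, (C a b).Finite := fun a ha b hb => (hswd a ha b hb).2.1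
  have hCcard : ∀ a ∈ A', ∀ b ∈ B, (C a b).ncard = k := fun a ha b hb => (hswd a ha b hb).2.2.1
  have hca : ∀ a ∈ A', ∀ b ∈ B, G.IsClique (insert a (C a b)) := fun a ha b hb =>
    (hswd a ha b hb).2.2.2.1 a (Set.mem_insert _ _)
  have hcb : ∀ a ∈ A', ∀ b ∈ B, G.IsClique (insert b (C a b)) := fun a ha b hb =>
    (hswd a ha b hb).2.2.2.1 b (Set.mem_insert_of_mem _ rfl)
  have hclo : ∀ a ∈ A', ∀ b ∈ B, ∀ x ∈ C a b, ∀ y, G.Adj x y → y ∈ C a b ∪ {a, b} :=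
    fun a ha b hb => (hswd a ha b hb).2.2.2.2
  have hadjca : ∀ a ∈ A', ∀ b ∈ B, ∀ c ∈ C a b, G.Adj c a := by
    intro a ha b hb c hc
    exact (sw_adj_all (hCd a ha b hb) (hca a ha b hb) (hcb a ha b hb) hc a
      (Or.inr (Set.mem_insert _ _)) (fun h => sw_a_not_mem (hCd a ha b hb) (h ▸ hc)))
  have hadjcb : ∀ a ∈ A', ∀ b ∈ B, ∀ c ∈ C a b, G.Adj c b := by
    intro a ha b hb c hc
    exact (sw_adj_all (hCd a ha b hb) (hca a ha b hb) (hcb a ha b hb) hc b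
      (Or.inr (Set.mem_insert_of_mem _ rfl)) (fun h => sw_b_not_mem (hCd a ha b hb) (h ▸ hc)))
  -- no element of A' ∪ B ∪ switchers is a leaf
  have htwoA' : ∀ a ∈ A', ∃ y z, y ≠ z ∧ G.Adj a y ∧ G.Adj a z := by
    intro a ha
    obtain ⟨b0, hb0⟩ := hBne
    have h1 : 1 < (C a b0).ncard := by rw [hCcard a ha b0 hb0]; omega
    obtain ⟨c1, hc1, c2, hc2, hcne⟩ := (Set.one_lt_ncard (hCfin a ha b0 hb0)).1 h1
    exact ⟨c1, c2, hcne, (hadjca a ha b0 hb0 c1 hc1).symm, (hadjca a ha b0 hb0 c2 hc2).symm⟩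
  have htwoB : ∀ b ∈ B, ∃ y z, y ≠ z ∧ G.Adj b y ∧ G.Adj b z := by
    intro b hb
    have h1 : 1 < (C v b).ncard := by rw [hCcard v hvA' b hb]; omega
    obtain ⟨c1, hc1, c2, hc2, hcne⟩ := (Set.one_lt_ncard (hCfin v hvA' b hb)).1 h1
    exact ⟨c1, c2, hcne, (hadjcb v hvA' b hb c1 hc1).symm, (hadjcb v hvA' b hb c2 hc2).symm⟩
  have htwoC : ∀ a ∈ A', ∀ b ∈ B, ∀ c ∈ C a b, ∃ y z, y ≠ z ∧ G.Adj c y ∧ G.Adj c z :=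
    fun a ha b hb c hc =>
      ⟨a, b, hne_ab a ha b hb, hadjca a ha b hb c hc, hadjcb a ha b hb c hc⟩
  -- choice of answering colors for B
  set γfun : V → ℕ := fun b => if h : b ∈ B then (hgood b h).choose else 0 with hγfun
  have hγspec : ∀ b (h : b ∈ B), γfun b ∈ L b ∧ ∀ a ∈ A',
      ∃ σ : V → ℕ, Set.InjOn σ (C a b) ∧ (∀ c ∈ C a b, σ c ∈ L c) ∧
        (φ a = γfun b → ∀ c ∈ C a b, σ c ≠ γfun b) := by
    intro b h
    simp only [hγfun, dif_pos h]
    exact (hgood b h).choose_spec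
  -- choice of switcher colorings
  set σfun : V → V → V → ℕ := fun a b =>
    if h : a ∈ A' ∧ b ∈ B then ((hγspec b h.2).2 a h.1).choose else fun _ => 0 with hσfun
  have hσspec : ∀ a (ha : a ∈ A') b (hb : b ∈ B),
      Set.InjOn (σfun a b) (C a b) ∧ (∀ c ∈ C a b, σfun a b c ∈ L c) ∧
        (φ a = γfun b → ∀ c ∈ C a b, σfun a b c ≠ γfun b) := by
    intro a ha b hb
    simp only [hσfun, dif_pos (⟨ha, hb⟩ : a ∈ A' ∧ b ∈ B)]
    exact ((hγspec b hb).2 a ha).choose_spec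
  -- canonical pair for switcher vertices
  set pickP : V → V × V := fun x =>
    if h : ∃ p : V × V, p.1 ∈ A' ∧ p.2 ∈ B ∧ x ∈ C p.1 p.2 then h.choose else (v, v) with hpickP
  have hpick : ∀ a ∈ A', ∀ b ∈ B, ∀ x ∈ C a b, pickP x = (a, b) := by
    intro a ha b hb x hx
    have hex : ∃ p : V × V, p.1 ∈ A' ∧ p.2 ∈ B ∧ x ∈ C p.1 p.2 := ⟨(a, b), ha, hb, hx⟩
    simp only [hpickP, dif_pos hex]
    obtain ⟨h1, h2, h3⟩ := hex.choose_spec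
    by_contra hne
    have hor : hex.choose.1 ≠ a ∨ hex.choose.2 ≠ b := by
      by_contra hcon
      push_neg at hcon
      exact hne (Prod.ext hcon.1 hcon.2)
    exact (Set.disjoint_left.1 (hCdisj _ h1 _ h2 a ha b hb hor) h3) hx
  -- the core coloring
  set SW : Set V := ⋃ a ∈ A', ⋃ b ∈ B, C a b with hSW
  set ρcore : V → ℕ := fun x =>
    if x ∈ A' then φ x else if x ∈ B then γfun x
    else if x ∈ SW then σfun (pickP x).1 (pickP x).2 x else sInf (L x) with hρcore
  have hρcoreA' : ∀ a ∈ A', ρcore a = φ a := by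
    intro a ha; simp only [hρcore, if_pos ha]
  have hnotA'B : ∀ b ∈ B, b ∉ A' := by
    intro b hb hbA'
    exact hne_ab b hbA' b hb rfl
  have hρcoreB : ∀ b ∈ B, ρcore b = γfun b := by
    intro b hb
    simp only [hρcore, if_neg (hnotA'B b hb), if_pos hb]
  have hCnotA'B : ∀ a ∈ A', ∀ b ∈ B, ∀ c ∈ C a b, c ∉ A' ∧ c ∉ B := by
    intro a ha b hb c hc
    have hd := hCav a ha b hb
    constructor
    · rintro (rfl | hcA)
      · exact Set.disjoint_left.1 hd hc (Set.mem_insert _ _)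
      · exact Set.disjoint_left.1 hd hc (Set.mem_insert_of_mem _ (Or.inl hcA))
    · intro hcB
      exact Set.disjoint_left.1 hd hc (Set.mem_insert_of_mem _ (Or.inr hcB))
  have hρcoreC : ∀ a ∈ A', ∀ b ∈ B, ∀ c ∈ C a b, ρcore c = σfun a b c := by
    intro a ha b hb c hc
    obtain ⟨h1, h2⟩ := hCnotA'B a ha b hb c hc
    have hcSW : c ∈ SW := by
      simp only [hSW, Set.mem_iUnion]
      exact ⟨a, ha, b, hb, hc⟩
    simp only [hρcore, if_neg h1, if_neg h2, if_pos hcSW, hpick a ha b hb c hc]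
  -- the final coloring, fixing leaves
  have hone_lt : ∀ x : V, 1 < (L x).ncard := by
    intro x; rw [(hL x).2]; omega
  set ρ : V → ℕ := fun x =>
    if h : ∃ f, f ∈ A ∪ B ∧ IsLeafAt G x f then
      (Set.exists_ne_of_one_lt_ncard (hone_lt x) (ρcore h.choose)).choose
    else ρcore x with hρ
  have hρeq : ∀ x, (∃ y z, y ≠ z ∧ G.Adj x y ∧ G.Adj x z) → ρ x = ρcore x := by
    intro x ⟨y, z, hyz, hy, hz⟩
    have : ¬∃ f, f ∈ A ∪ B ∧ IsLeafAt G x f := by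
      rintro ⟨f, -, hf⟩
      exact not_leaf_of_two_adj hyz hy hz f hf
    simp only [hρ, dif_neg this]
  have hρA' : ∀ a ∈ A', ρ a = φ a := fun a ha =>
    (hρeq a (htwoA' a ha)).trans (hρcoreA' a ha)
  have hρB : ∀ b ∈ B, ρ b = γfun b := fun b hb =>
    (hρeq b (htwoB b hb)).trans (hρcoreB b hb)
  have hρC : ∀ a ∈ A', ∀ b ∈ B, ∀ c ∈ C a b, ρ c = σfun a b c := fun a ha b hb c hc =>
    (hρeq c (htwoC a ha b hb c hc)).trans (hρcoreC a ha b hb c hc)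
  have hρleaf : ∀ x f, f ∈ A ∪ B → IsLeafAt G x f → ρ x ∈ L x ∧ ρ x ≠ ρcore f := by
    intro x f hfAB hf
    have hex : ∃ f, f ∈ A ∪ B ∧ IsLeafAt G x f := ⟨f, hfAB, hf⟩
    have hfeq : hex.choose = f := by
      have h2 := hex.choose_spec.2
      have : ({hex.choose} : Set V) = {f} := by rw [← h2, ← hf]
      exact Set.singleton_eq_singleton_iff.1 this
    have hspec := (Set.exists_ne_of_one_lt_ncard (hone_lt x) (ρcore hex.choose)).choose_spec
    constructor
    · rw [hρ]; simp only [dif_pos hex]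
      exact hspec.1
    · rw [hρ]; simp only [dif_pos hex]
      have heq2 : ρcore f = ρcore hex.choose := by rw [hfeq]
      rw [heq2]
      exact hspec.2
  -- ρ is an L-coloring
  have hLcol : IsLColoring L ρ := by
    intro x
    by_cases hleaf : ∃ f, f ∈ A ∪ B ∧ IsLeafAt G x f
    · obtain ⟨f, hfAB, hf⟩ := hleaf
      exact (hρleaf x f hfAB hf).1
    · rw [hρ]; simp only [dif_neg hleaf]
      by_cases h1 : x ∈ A'
      · simp only [hρcore, if_pos h1]; exact hφ x h1
      by_cases h2 : x ∈ B
      · simp only [hρcore, if_neg h1, if_pos h2]; exact (hγspec x h2).1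
      by_cases h3 : x ∈ SW
      · simp only [hρcore, if_neg h1, if_neg h2, if_pos h3]
        simp only [hSW, Set.mem_iUnion] at h3
        obtain ⟨a, ha, b, hb, hc⟩ := h3
        rw [hpick a ha b hb x hc]
        exact (hσspec a ha b hb).2.1 x hc
      · simp only [hρcore, if_neg h1, if_neg h2, if_neg h3]
        exact Nat.sInf_mem (Set.nonempty_of_ncard_ne_zero (by rw [(hL x).2]; omega))
  -- main star-freeness property
  refine ⟨hφ v hvA', ρ, hLcol, hρA' v hvA', ?_⟩
  intro f hf W hmax hstarC hmono
  rw [hFdef] at hf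
  rcases hf with hf | hf
  · -- f ∈ A ∪ B : its chosen leaf has a different color
    obtain ⟨l, hl⟩ : IsLeafed G f := by
      rcases hf with h | h
      exacts [hAleafed f h, hBleafed f h]
    have hlW : l ∈ W := leaf_mem_maxStar hl hmax hstarC
    have hfW : f ∈ W := hstarC.1
    have hval := hρleaf l f hf hl
    have hρf : ρ f = ρcore f := by
      rcases hf with h | h
      · exact hρeq f (htwoA' f (Set.mem_insert_of_mem _ h))
      · exact hρeq f (htwoB f h)
    exact hval.2 ((hmono l hlW f hfW).trans hρf)
  · -- f in a switcher
    simp only [hSW, Set.mem_iUnion] at hf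
    obtain ⟨a, ha, b, hb, hc⟩ := hf
    have hclass := sw_star_classify (hne_ab a ha b hb) (hsw a ha b hb).1
      (hCd a ha b hb) (hca a ha b hb) (hcb a ha b hb) (hclo a ha b hb) hc hmax hstarC
    rcases hclass with ⟨c', hc', hcne, rfl⟩ | rfl
    · have := hmono f (Set.mem_insert _ _) c' (Set.mem_insert_of_mem _ rfl)
      rw [hρC a ha b hb f hc, hρC a ha b hb c' hc'] at this
      exact hcne ((hσspec a ha b hb).1 hc' hc this.symm)
    · have h1 := hmono a (Set.mem_insert_of_mem _ (Set.mem_insert _ _))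
        b (Set.mem_insert_of_mem _ (Set.mem_insert_of_mem _ rfl))
      have h2 := hmono f (Set.mem_insert _ _)
        b (Set.mem_insert_of_mem _ (Set.mem_insert_of_mem _ rfl))
      rw [hρA' a ha, hρB b hb] at h1
      rw [hρC a ha b hb f hc, hρB b hb] at h2
      exact (hσspec a ha b hb).2.2 h1 f hc h2
end Aux
/-- Properties of `k`-forcers. -/
theorem forcer_properties (G : SimpleGraph V) (k : ℕ) (hk : 2 ≤ k) (v : V) (F : Set V)
    (hF : IsForcer G k v F) :
    ((∀ T : Set V, IsInducedComplete G (k + 2) T ∨ IsInducedCycle G 4 T → Disjoint T F) ∧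
     (∀ L : V → Set ℕ, IsListAssignment L k → ∃ c, LAdmissible G F L v c) ∧
     (∀ L₀ : V → Set ℕ, (∀ u, u ∉ F → (L₀ u).Finite ∧ (L₀ u).ncard = k) →
       ∃ L : V → Set ℕ, IsListAssignment L k ∧ (∀ u, u ∉ F → L u = L₀ u) ∧
         ∃! c, LAdmissible G F L v c)) := by
  classical
  obtain ⟨A, B, C, hAfin, hAcard, hBfin, hBcard, hAleafed, hBleafed, hvA, hvB, hABdisj,
    hsw, hCdisj, hCav, hFdef, hclosure⟩ := hF
  set A' : Set V := insert v A with hA'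
  have hvA' : v ∈ A' := Set.mem_insert _ _
  have hA'fin : A'.Finite := hAfin.insert v
  have hA'card : A'.ncard = k := by
    rw [hA', Set.ncard_insert_of_notMem hvA hAfin, hAcard]; omega
  have h4 : 4 ≤ k ^ k := by
    calc (4 : ℕ) = 2 ^ 2 := rfl
    _ ≤ k ^ 2 := Nat.pow_le_pow_left hk 2
    _ ≤ k ^ k := Nat.pow_le_pow_right (by omega) hk
  have hBne : B.Nonempty := Set.nonempty_of_ncard_ne_zero (by rw [hBcard]; omega)
  have hne_ab : ∀ a ∈ A', ∀ b ∈ B, a ≠ b := by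
    rintro a (rfl | ha) b hb
    · exact fun h => hvB (h ▸ hb)
    · exact fun h => (Set.disjoint_left.1 hABdisj ha) (h ▸ hb)
  have hswd := fun a ha b hb => ((hsw a ha b hb).2 : IsSwitcher G k {a, b} (C a b))
  have hCd : ∀ a ∈ A', ∀ b ∈ B, Disjoint (C a b) {a, b} := fun a ha b hb => (hswd a ha b hb).1
  have hCfin : ∀ a ∈ A', ∀ b ∈ B, (C a b).Finite := fun a ha b hb => (hswd a ha b hb).2.1
  have hCcard : ∀ a ∈ A', ∀ b ∈ B, (C a b).ncard = k := fun a ha b hb =>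
    (hswd a ha b hb).2.2.1
  have hca : ∀ a ∈ A', ∀ b ∈ B, G.IsClique (insert a (C a b)) := fun a ha b hb =>
    (hswd a ha b hb).2.2.2.1 a (Set.mem_insert _ _)
  have hcb : ∀ a ∈ A', ∀ b ∈ B, G.IsClique (insert b (C a b)) := fun a ha b hb =>
    (hswd a ha b hb).2.2.2.1 b (Set.mem_insert_of_mem _ rfl)
  have hclo : ∀ a ∈ A', ∀ b ∈ B, ∀ x ∈ C a b, ∀ y, G.Adj x y → y ∈ C a b ∪ {a, b} :=
    fun a ha b hb => (hswd a ha b hb).2.2.2.2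
  have hadjca : ∀ a ∈ A', ∀ b ∈ B, ∀ c ∈ C a b, G.Adj c a := by
    intro a ha b hb c hc
    exact (sw_adj_all (hCd a ha b hb) (hca a ha b hb) (hcb a ha b hb) hc a
      (Or.inr (Set.mem_insert _ _)) (fun h => sw_a_not_mem (hCd a ha b hb) (h ▸ hc)))
  have hadjcb : ∀ a ∈ A', ∀ b ∈ B, ∀ c ∈ C a b, G.Adj c b := by
    intro a ha b hb c hc
    exact (sw_adj_all (hCd a ha b hb) (hca a ha b hb) (hcb a ha b hb) hc b
      (Or.inr (Set.mem_insert_of_mem _ rfl)) (fun h => sw_b_not_mem (hCd a ha b hb) (h ▸ hc)))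
  have hadjcc : ∀ a ∈ A', ∀ b ∈ B, ∀ c ∈ C a b, ∀ c' ∈ C a b, c ≠ c' → G.Adj c c' := by
    intro a ha b hb c hc c' hc' hnecc
    exact hca a ha b hb (Set.mem_insert_of_mem _ hc) (Set.mem_insert_of_mem _ hc') hnecc
  have hNA : ∀ a ∈ A, ∀ y, G.Adj a y → (∃ b ∈ B, y ∈ C a b) ∨ IsLeafAt G y a := by
    intro a haA y hy
    rcases hclosure a (Or.inl haA) y hy with ⟨a', ha', b, hb, heq, hyC⟩ | h
    · rcases heq with h | h
      · exact Or.inl ⟨b, hb, by rw [h]; exact hyC⟩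
      · exact (Set.disjoint_left.1 hABdisj haA (h ▸ hb)).elim
    · exact Or.inr h
  have hNB : ∀ b ∈ B, ∀ y, G.Adj b y → (∃ a ∈ A', y ∈ C a b) ∨ IsLeafAt G y b := by
    intro b hbB y hy
    rcases hclosure b (Or.inr hbB) y hy with ⟨a', ha', b', hb', heq, hyC⟩ | h
    · rcases heq with h | h
      · exact (hne_ab a' ha' b hbB h.symm).elim
      · exact Or.inl ⟨a', ha', by rw [h]; exact hyC⟩
    · exact Or.inr h
  have hCnotavb : ∀ a ∈ A', ∀ b ∈ B, ∀ x ∈ C a b, x ∉ insert v (A ∪ B) := by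
    intro a ha b hb x hx
    exact Set.disjoint_left.1 (hCav a ha b hb) hx
  have hA'av : ∀ a ∈ A', a ∈ insert v (A ∪ B) := by
    rintro a (rfl | h)
    · exact Set.mem_insert _ _
    · exact Set.mem_insert_of_mem _ (Or.inl h)
  refine ⟨?_, ?_, ?_⟩
  · -- PART (i)
    rintro T (hT | hT)
    · -- induced K_{k+2}
      obtain ⟨hTcl, hTfin, hTcard⟩ := hT
      rw [Set.disjoint_right]
      intro x hxF hxT
      rw [hFdef] at hxF
      rcases hxF with (hxA | hxB) | hxSW
      · -- x ∈ A
        have hxA' : x ∈ A' := Set.mem_insert_of_mem _ hxA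
        have hTx : ∀ y ∈ T, y ≠ x → ∃ b ∈ B, y ∈ C x b := by
          intro y hy hyx
          have hadj : G.Adj x y := hTcl hxT hy (fun h => hyx h.symm)
          rcases hNA x hxA y hadj with h | h
          · exact h
          · exfalso
            have hTbig : ¬ T ⊆ {x, y} := by
              intro hsub
              have h1 := Set.ncard_le_ncard hsub ((Set.finite_singleton y).insert x)
              have h2 : ({x, y} : Set V).ncard ≤ 2 :=
                (Set.ncard_insert_le _ _).trans (by norm_num [Set.ncard_singleton])

              rw [hTcard] at h1
              omega
            obtain ⟨z, hzT, hzxy⟩ := Set.not_subset.1 hTbig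
            simp only [Set.mem_insert_iff, Set.mem_singleton_iff, not_or] at hzxy
            have hadjyz : G.Adj y z := hTcl hy hzT (fun hh => hzxy.2 hh.symm)
            exact hzxy.1 (h.eq_of_adj hadjyz)
        have hTdcard : (T \ {x}).ncard = k + 1 := by
          rw [Set.ncard_diff_singleton_of_mem hxT, hTcard]
          omega
        obtain ⟨y0, hy0⟩ : (T \ {x}).Nonempty :=
          Set.nonempty_of_ncard_ne_zero (by rw [hTdcard]; omega)
        obtain ⟨b0, hb0, hy0C⟩ := hTx y0 hy0.1 hy0.2
        have hTsub : T \ {x} ⊆ C x b0 := by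
          rintro y ⟨hyT, hyx⟩
          obtain ⟨b, hb, hyC⟩ := hTx y hyT hyx
          rcases eq_or_ne b b0 with rfl | hbne
          · exact hyC
          · exfalso
            have hyne : y ≠ y0 := by
              rintro rfl
              exact (Set.disjoint_left.1
                (hCdisj x hxA' b hb x hxA' b0 hb0 (Or.inr hbne)) hyC) hy0C
            have hadjyy0 : G.Adj y y0 := hTcl hyT hy0.1 hyne
            rcases hclo x hxA' b hb y hyC y0 hadjyy0 with h | h
            · exact (Set.disjoint_left.1
                (hCdisj x hxA' b hb x hxA' b0 hb0 (Or.inr hbne)) h) hy0C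
            · rcases h with h | h
              · exact hy0.2 h
              · exact hCnotavb x hxA' b0 hb0 y0 hy0C
                  (Set.mem_insert_of_mem _ (Or.inr (h ▸ hb)))
        have hfin := Set.ncard_le_ncard hTsub (hCfin x hxA' b0 hb0)
        rw [hTdcard, hCcard x hxA' b0 hb0] at hfin
        omega
      · -- x ∈ B
        have hTx : ∀ y ∈ T, y ≠ x → ∃ a ∈ A', y ∈ C a x := by
          intro y hy hyx
          have hadj : G.Adj x y := hTcl hxT hy (fun h => hyx h.symm)
          rcases hNB x hxB y hadj with h | h
          · exact h
          · exfalso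
            have hTbig : ¬ T ⊆ {x, y} := by
              intro hsub
              have h1 := Set.ncard_le_ncard hsub ((Set.finite_singleton y).insert x)
              have h2 : ({x, y} : Set V).ncard ≤ 2 :=
                (Set.ncard_insert_le _ _).trans (by norm_num [Set.ncard_singleton])

              rw [hTcard] at h1
              omega
            obtain ⟨z, hzT, hzxy⟩ := Set.not_subset.1 hTbig
            simp only [Set.mem_insert_iff, Set.mem_singleton_iff, not_or] at hzxy
            have hadjyz : G.Adj y z := hTcl hy hzT (fun hh => hzxy.2 hh.symm)
            exact hzxy.1 (h.eq_of_adj hadjyz)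
        have hTdcard : (T \ {x}).ncard = k + 1 := by
          rw [Set.ncard_diff_singleton_of_mem hxT, hTcard]
          omega
        obtain ⟨y0, hy0⟩ : (T \ {x}).Nonempty :=
          Set.nonempty_of_ncard_ne_zero (by rw [hTdcard]; omega)
        obtain ⟨a0, ha0, hy0C⟩ := hTx y0 hy0.1 hy0.2
        have hTsub : T \ {x} ⊆ C a0 x := by
          rintro y ⟨hyT, hyx⟩
          obtain ⟨a, ha, hyC⟩ := hTx y hyT hyx
          rcases eq_or_ne a a0 with rfl | hane
          · exact hyC
          · exfalso
            have hyne : y ≠ y0 := by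
              rintro rfl
              exact (Set.disjoint_left.1
                (hCdisj a ha x hxB a0 ha0 x hxB (Or.inl hane)) hyC) hy0C
            have hadjyy0 : G.Adj y y0 := hTcl hyT hy0.1 hyne
            rcases hclo a ha x hxB y hyC y0 hadjyy0 with h | h
            · exact (Set.disjoint_left.1
                (hCdisj a ha x hxB a0 ha0 x hxB (Or.inl hane)) h) hy0C
            · rcases h with h | h
              · -- y0 = a ∈ A'
                apply hCnotavb a0 ha0 x hxB y0 hy0C
                have hy0A' : y0 ∈ A' := by rw [h]; exact ha
                rcases hy0A' with h2 | h2
                · exact Set.mem_insert_iff.2 (Or.inl h2)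
                · exact Set.mem_insert_iff.2 (Or.inr (Or.inl h2))
              · exact hy0.2 h
        have hfin := Set.ncard_le_ncard hTsub (hCfin a0 ha0 x hxB)
        rw [hTdcard, hCcard a0 ha0 x hxB] at hfin
        omega
      · -- x in a switcher
        simp only [Set.mem_iUnion] at hxSW
        obtain ⟨a, ha, b, hb, hxC⟩ := hxSW
        have hTsub : T ⊆ C a b ∪ {a, b} := by
          intro y hy
          rcases eq_or_ne y x with rfl | hyx
          · exact Or.inl hxC
          · exact hclo a ha b hb x hxC y (hTcl hxT hy (Ne.symm hyx))
        have habT : a ∉ T ∨ b ∉ T := by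
          by_contra hcon
          push_neg at hcon
          exact (hsw a ha b hb).1 (hTcl hcon.1 hcon.2 (hne_ab a ha b hb))
        rcases habT with h | h
        · have hsub2 : T ⊆ insert b (C a b) := by
            intro y hy
            rcases hTsub hy with h1 | h1
            · exact Set.mem_insert_of_mem _ h1
            · rcases h1 with rfl | rfl
              · exact absurd hy h
              · exact Set.mem_insert _ _
          have h1 := Set.ncard_le_ncard hsub2 ((hCfin a ha b hb).insert b)
          have h2 := Set.ncard_insert_le b (C a b)
          rw [hTcard] at h1
          rw [hCcard a ha b hb] at h2
          omega
        · have hsub2 : T ⊆ insert a (C a b) := by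
            intro y hy
            rcases hTsub hy with h1 | h1
            · exact Set.mem_insert_of_mem _ h1
            · rcases h1 with rfl | rfl
              · exact Set.mem_insert _ _
              · exact absurd hy h
          have h1 := Set.ncard_le_ncard hsub2 ((hCfin a ha b hb).insert a)
          have h2 := Set.ncard_insert_le a (C a b)
          rw [hTcard] at h1
          rw [hCcard a ha b hb] at h2
          omega
    · -- induced C4
      obtain ⟨g, hginj, hgrange, hgadj⟩ := hT
      rw [Set.disjoint_right]
      intro x hxF hxT
      rw [← hgrange] at hxT
      obtain ⟨i, rfl⟩ := hxT
      have hcancel : ∀ c d : ZMod 4, i + c = i + d → c = d := fun c d h =>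
        add_left_cancel h
      have hne4 : ∀ c d : ZMod 4, c ≠ d → g (i + c) ≠ g (i + d) := by
        intro c d hcd h
        exact hcd (hcancel _ _ (hginj h))
      have hadj4 : ∀ c d : ZMod 4,
          G.Adj (g (i + c)) (g (i + d)) ↔ (d = c + 1 ∨ c = d + 1) := by
        intro c d
        rw [hgadj, add_assoc, add_assoc]
        constructor
        · rintro (h | h)
          · exact Or.inl (hcancel _ _ h)
          · exact Or.inr (hcancel _ _ h)
        · rintro (h | h)
          · exact Or.inl (by rw [h])
          · exact Or.inr (by rw [h])
      have hgi : g i = g (i + 0) := by rw [add_zero]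
      have hxy1 : G.Adj (g i) (g (i + 1)) := by
        rw [hgi]; exact (hadj4 0 1).2 (Or.inl (by decide))
      have hxy2 : G.Adj (g i) (g (i + 3)) := by
        rw [hgi]; exact (hadj4 0 3).2 (Or.inr (by decide))
      have hy1z : G.Adj (g (i + 1)) (g (i + 2)) := (hadj4 1 2).2 (Or.inl (by decide))
      have hy2z : G.Adj (g (i + 3)) (g (i + 2)) := (hadj4 3 2).2 (Or.inr (by decide))
      have hy1y2 : ¬G.Adj (g (i + 1)) (g (i + 3)) := by
        rw [hadj4 1 3]; decide
      have hxz : ¬G.Adj (g i) (g (i + 2)) := by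
        rw [hgi, hadj4 0 2]; decide
      have hney : g (i + 1) ≠ g (i + 3) := hne4 1 3 (by decide)
      have hnexz : g i ≠ g (i + 2) := by rw [hgi]; exact hne4 0 2 (by decide)
      rw [hFdef] at hxF
      rcases hxF with (hxA | hxB) | hxSW
      · -- x = g i ∈ A
        have hxA' : g i ∈ A' := Set.mem_insert_of_mem _ hxA
        have hgetC : ∀ y, G.Adj (g i) y → G.Adj y (g (i + 2)) → ∃ b ∈ B, y ∈ C (g i) b := by
          intro y hy hyz
          rcases hNA (g i) hxA y hy with h | h
          · exact h
          · exact absurd (h.eq_of_adj hyz).symm hnexz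
        obtain ⟨b1, hb1, hy1C⟩ := hgetC _ hxy1 hy1z
        obtain ⟨b2, hb2, hy2C⟩ := hgetC _ hxy2 hy2z
        have hbne : b1 ≠ b2 := by
          rintro rfl
          exact hy1y2 (hadjcc (g i) hxA' b1 hb1 _ hy1C _ hy2C hney)
        have hz1 : g (i + 2) ∈ C (g i) b1 ∪ {g i, b1} :=
          hclo (g i) hxA' b1 hb1 _ hy1C _ hy1z
        have hz2 : g (i + 2) ∈ C (g i) b2 ∪ {g i, b2} :=
          hclo (g i) hxA' b2 hb2 _ hy2C _ hy2z
        rcases hz1 with h1 | h1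
        · rcases hz2 with h2 | h2
          · exact (Set.disjoint_left.1
              (hCdisj _ hxA' b1 hb1 _ hxA' b2 hb2 (Or.inr hbne)) h1) h2
          · rcases h2 with h2 | h2
            · exact hnexz h2.symm
            · exact hCnotavb _ hxA' b1 hb1 _ h1
                (Set.mem_insert_of_mem _ (Or.inr (by rw [← h2] at hb2; exact hb2)))
        · rcases h1 with h1 | h1
          · exact hnexz h1.symm
          · rcases hz2 with h2 | h2
            · exact hCnotavb _ hxA' b2 hb2 _ h2
                (Set.mem_insert_of_mem _ (Or.inr (by rw [← h1] at hb1; exact hb1)))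
            · rcases h2 with h2 | h2
              · exact hnexz h2.symm
              · exact hbne (h1.symm.trans h2)
      · -- x = g i ∈ B
        have hgetC : ∀ y, G.Adj (g i) y → G.Adj y (g (i + 2)) →
            ∃ a ∈ A', y ∈ C a (g i) := by
          intro y hy hyz
          rcases hNB (g i) hxB y hy with h | h
          · exact h
          · exact absurd (h.eq_of_adj hyz).symm hnexz
        obtain ⟨a1, ha1, hy1C⟩ := hgetC _ hxy1 hy1z
        obtain ⟨a2, ha2, hy2C⟩ := hgetC _ hxy2 hy2z
        have hane : a1 ≠ a2 := by
          rintro rfl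
          exact hy1y2 (hadjcc a1 ha1 (g i) hxB _ hy1C _ hy2C hney)
        have hz1 : g (i + 2) ∈ C a1 (g i) ∪ {a1, g i} :=
          hclo a1 ha1 (g i) hxB _ hy1C _ hy1z
        have hz2 : g (i + 2) ∈ C a2 (g i) ∪ {a2, g i} :=
          hclo a2 ha2 (g i) hxB _ hy2C _ hy2z
        rcases hz1 with h1 | h1
        · rcases hz2 with h2 | h2
          · exact (Set.disjoint_left.1
              (hCdisj _ ha1 _ hxB _ ha2 _ hxB (Or.inl hane)) h1) h2
          · rcases h2 with h2 | h2
            · exact hCnotavb _ ha1 _ hxB _ h1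
                (by rw [h2]; exact hA'av a2 ha2)
            · exact hnexz h2.symm
        · rcases h1 with h1 | h1
          · rcases hz2 with h2 | h2
            · exact hCnotavb _ ha2 _ hxB _ h2
                (by rw [h1]; exact hA'av a1 ha1)
            · rcases h2 with h2 | h2
              · exact hane (h1.symm.trans h2)
              · exact hnexz h2.symm
          · exact hnexz h1.symm
      · -- x = g i in a switcher
        simp only [Set.mem_iUnion] at hxSW
        obtain ⟨a, ha, b, hb, hxC⟩ := hxSW
        have hy1m : g (i + 1) ∈ C a b ∪ {a, b} := hclo a ha b hb _ hxC _ hxy1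
        have hy2m : g (i + 3) ∈ C a b ∪ {a, b} := hclo a ha b hb _ hxC _ hxy2
        have hkey : (g (i + 1) = a ∧ g (i + 3) = b) ∨ (g (i + 1) = b ∧ g (i + 3) = a) := by
          rcases hy1m with h1 | h1
          · rcases hy2m with h2 | h2
            · exact absurd (hadjcc a ha b hb _ h1 _ h2 hney) hy1y2
            · rcases h2 with h2 | h2
              · exact absurd (show G.Adj (g (i + 1)) (g (i + 3)) by
                  rw [h2]; exact hadjca a ha b hb _ h1) hy1y2
              · exact absurd (show G.Adj (g (i + 1)) (g (i + 3)) by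
                  rw [h2]; exact hadjcb a ha b hb _ h1) hy1y2
          · rcases h1 with h1 | h1
            · rcases hy2m with h2 | h2
              · exact absurd (show G.Adj (g (i + 1)) (g (i + 3)) by
                  rw [h1]; exact (hadjca a ha b hb _ h2).symm) hy1y2
              · rcases h2 with h2 | h2
                · exact absurd (h1.trans h2.symm) hney
                · exact Or.inl ⟨h1, h2⟩
            · rcases hy2m with h2 | h2
              · exact absurd (show G.Adj (g (i + 1)) (g (i + 3)) by
                  rw [h1]; exact (hadjcb a ha b hb _ h2).symm) hy1y2
              · rcases h2 with h2 | h2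
                · exact Or.inr ⟨h1, h2⟩
                · exact absurd (h1.trans h2.symm) hney
        have hfinal : ∀ yb ya : V, G.Adj yb (g (i + 2)) → G.Adj ya (g (i + 2)) →
            yb = b → ya = a → False := by
          intro yb ya hzb hza hyb hya
          have hzb' : G.Adj b (g (i + 2)) := by rw [← hyb]; exact hzb
          have hza' : G.Adj (g (i + 2)) a := by rw [← hya]; exact hza.symm
          rcases hNB b hb _ hzb' with ⟨a'', ha'', hzC⟩ | h
          · rcases hclo a'' ha'' b hb _ hzC a hza' with h1 | h1
            · exact hCnotavb a'' ha'' b hb a h1 (hA'av a ha)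
            · rcases h1 with h1 | h1
              · have hzC' : g (i + 2) ∈ C a b := by rw [h1]; exact hzC
                have hzx : G.Adj (g (i + 2)) (g i) :=
                  hadjcc a ha b hb _ hzC' _ hxC (fun hh => hnexz hh.symm)
                exact hxz hzx.symm
              · exact hne_ab a ha b hb h1
          · exact hne_ab a ha b hb (h.eq_of_adj hza')
        rcases hkey with ⟨h1, h2⟩ | ⟨h1, h2⟩
        · exact hfinal _ _ hy2z hy1z h2 h1
        · exact hfinal _ _ hy1z hy2z h1 h2
  · -- PART (ii)
    intro L hLk
    have hSDR : ∀ a ∈ A', ∀ b ∈ B, ∃ σ : V → ℕ,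
        Set.InjOn σ (C a b) ∧ ∀ c ∈ C a b, σ c ∈ L c := by
      intro a ha b hb
      exact exists_sdr (hCfin a ha b hb) (le_of_eq (hCcard a ha b hb))
        (fun c _ => ⟨(hLk c).1, le_of_eq (hLk c).2.symm⟩)
    have hLfin : ∀ x, (L x).Finite := fun x => (hLk x).1
    have hLcard : ∀ x, (L x).ncard = k := fun x => (hLk x).2
    -- find a tuple that every b can answer
    have key : ∃ φ : V → ℕ, (∀ a ∈ A', φ a ∈ L a) ∧
        ∀ b ∈ B, ∃ γ ∈ L b, ∀ a ∈ A',
          ∃ σ : V → ℕ, Set.InjOn σ (C a b) ∧ (∀ c ∈ C a b, σ c ∈ L c) ∧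
            (φ a = γ → ∀ c ∈ C a b, σ c ≠ γ) := by
      by_cases hcase : ∃ a ∈ A', ∃ a' ∈ A', a ≠ a' ∧ (L a ∩ L a').Nonempty
      · -- two lists intersect: a non-injective tuple works
        obtain ⟨a, ha, a', ha', hne, γ0, hγ0⟩ := hcase
        refine ⟨fun x => if x = a ∨ x = a' then γ0 else if x ∈ A' then sInf (L x) else 0,
          ?_, ?_⟩
        · intro x hx
          by_cases h : x = a ∨ x = a'
          · simp only [if_pos h]
            rcases h with rfl | rfl
            exacts [hγ0.1, hγ0.2]
          · simp only [if_neg h, if_pos hx]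
            exact Nat.sInf_mem (Set.nonempty_of_ncard_ne_zero (by rw [hLcard x]; omega))
        · intro b hb
          set φ : V → ℕ := fun x => if x = a ∨ x = a' then γ0
            else if x ∈ A' then sInf (L x) else 0 with hφdef
          have himg : φ '' A' ⊆ φ '' (A' \ {a'}) := by
            rintro y ⟨x, hx, rfl⟩
            by_cases h : x = a'
            · subst h
              refine ⟨a, ⟨ha, fun hm => hne hm⟩, ?_⟩
              simp only [hφdef, if_pos (Or.inl rfl), if_pos (Or.inr rfl)]
            · exact ⟨x, ⟨hx, h⟩, rfl⟩
          have hsmall : (φ '' A').ncard ≤ k - 1 := by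
            calc (φ '' A').ncard ≤ (φ '' (A' \ {a'})).ncard :=
                Set.ncard_le_ncard himg (hA'fin.diff.image _)
            _ ≤ (A' \ {a'}).ncard := Set.ncard_image_le hA'fin.diff
            _ = k - 1 := by rw [Set.ncard_diff_singleton_of_mem ha', hA'card]
          have hout : ∃ γ ∈ L b, γ ∉ φ '' A' := by
            by_contra hcon
            push_neg at hcon
            have hsub : L b ⊆ φ '' A' := hcon
            have := Set.ncard_le_ncard hsub (hA'fin.image _)
            rw [hLcard b] at this
            omega
          obtain ⟨γ, hγLb, hγout⟩ := hout
          refine ⟨γ, hγLb, fun a'' ha'' => ?_⟩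
          obtain ⟨σ, hσ1, hσ2⟩ := hSDR a'' ha'' b hb
          exact ⟨σ, hσ1, hσ2, fun hcon => absurd (hcon ▸ Set.mem_image_of_mem φ ha'') hγout⟩
      · -- all lists pairwise disjoint
        push_neg at hcase
        have hdisjL : ∀ a ∈ A', ∀ a' ∈ A', a ≠ a' → L a ∩ L a' = ∅ := hcase
        obtain ⟨TF, hTFcard, hTFmem⟩ := exists_tuple_finset (k := k) hA'fin.toFinset
          (fun a => (hLfin a).toFinset) (by
            intro a _
            rw [← Set.ncard_eq_toFinset_card _ (hLfin a)]
            exact hLcard a)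
        have hscard : hA'fin.toFinset.card = k := by
          rw [← Set.ncard_eq_toFinset_card _ hA'fin]; exact hA'card
        set g : V → (V → ℕ) := fun b x => if x ∈ A' then sInf (L b ∩ L x) else 0 with hgdef
        have hmiss : ∃ ψ ∈ TF, ψ ∉ g '' B := by
          by_contra hcon
          push_neg at hcon
          have hsub : (TF : Set (V → ℕ)) ⊆ g '' B := fun ψ hψ => hcon ψ hψ
          have h1 := Set.ncard_le_ncard hsub (hBfin.image g)
          rw [Set.ncard_coe_finset, hTFcard, hscard] at h1
          have h2 := Set.ncard_image_le (s := B) (f := g) hBfin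
          rw [hBcard] at h2
          omega
        obtain ⟨ψ, hψTF, hψmiss⟩ := hmiss
        obtain ⟨hψ1, hψ2⟩ := (hTFmem ψ).1 hψTF
        have hψmem : ∀ a ∈ A', ψ a ∈ L a := by
          intro a ha
          have := hψ1 a (hA'fin.mem_toFinset.2 ha)
          rwa [Set.Finite.mem_toFinset] at this
        refine ⟨ψ, hψmem, ?_⟩
        intro b hb
        by_contra hbad
        push_neg at hbad
        have hbadγ : ∀ γ ∈ L b, ∃ a ∈ A', ψ a = γ := by
          intro γ hγ
          obtain ⟨a, ha, hno⟩ := hbad γ hγ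
          obtain ⟨σ, hσ1, hσ2⟩ := hSDR a ha b hb
          exact ⟨a, ha, (hno σ hσ1 hσ2).1⟩
        have hsub : L b ⊆ ψ '' A' := by
          intro γ hγ
          obtain ⟨a, ha, rfl⟩ := hbadγ γ hγ
          exact Set.mem_image_of_mem ψ ha
        have heq : L b = ψ '' A' :=
          Set.eq_of_subset_of_ncard_le hsub
            (by calc (ψ '' A').ncard ≤ A'.ncard := Set.ncard_image_le hA'fin
                _ = k := hA'card
                _ = (L b).ncard := (hLcard b).symm)
            (hA'fin.image ψ)
        apply hψmiss
        refine ⟨b, hb, ?_⟩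
        funext x
        by_cases hx : x ∈ A'
        · have hsing : L b ∩ L x = {ψ x} := by
            apply Set.Subset.antisymm
            · rintro γ ⟨hγb, hγx⟩
              rw [heq] at hγb
              obtain ⟨x', hx', rfl⟩ := hγb
              rcases eq_or_ne x' x with rfl | hne2
              · rfl
              · exfalso
                have hmem2 : ψ x' ∈ L x' ∩ L x := ⟨hψmem x' hx', hγx⟩
                rw [hdisjL x' hx' x hx hne2] at hmem2
                exact hmem2
            · intro γ hγ
              rw [Set.mem_singleton_iff] at hγ
              subst hγ
              exact ⟨by rw [heq]; exact Set.mem_image_of_mem ψ hx, hψmem x hx⟩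
          simp only [hgdef, if_pos hx, hsing, csInf_singleton]
        · simp only [hgdef, if_neg hx]
          exact (hψ2 x (fun h => hx (hA'fin.mem_toFinset.1 h))).symm
    obtain ⟨φ, hφmem, hgood⟩ := key
    exact ⟨φ v, admissible_of_tuple G k hk v A B C F hAleafed hBleafed hvB hABdisj hBne
      hsw hCdisj hCav hFdef L hLk φ hφmem hgood⟩
  · -- PART (iii)
    intro L₀ hL₀
    have hvF : v ∉ F := by
      rw [hFdef]
      rintro ((h | h) | h)
      · exact hvA h
      · exact hvB h
      · simp only [Set.mem_iUnion] at h
        obtain ⟨a, ha, b, hb, hvC⟩ := h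
        exact hCnotavb a ha b hb v hvC (Set.mem_insert _ _)
    have hLvfin : (L₀ v).Finite := (hL₀ v hvF).1
    have hLvcard : (L₀ v).ncard = k := (hL₀ v hvF).2
    set m := sSup (L₀ v) with hm
    have hLvle : ∀ γ ∈ L₀ v, γ ≤ m := fun γ hγ => le_csSup hLvfin.bddAbove hγ
    set ι : V → ℕ := fun x =>
      if h : x ∈ hAfin.toFinset then (hAfin.toFinset.equivFin ⟨x, h⟩ : ℕ) else 0 with hι
    have hιinj : Set.InjOn ι A := by
      intro x hx y hy hxy
      rw [hι] at hxy
      simp only [dif_pos (hAfin.mem_toFinset.2 hx), dif_pos (hAfin.mem_toFinset.2 hy)] at hxy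
      have h2 := hAfin.toFinset.equivFin.injective (Fin.val_injective hxy)
      exact Subtype.ext_iff.1 h2
    set D : V → Set ℕ := fun a => Set.Ico (m + 1 + ι a * k) (m + 1 + ι a * k + k) with hD
    have hDfin : ∀ a, (D a).Finite := fun a => Set.finite_Ico _ _
    have hDcard : ∀ a, (D a).ncard = k := by
      intro a
      simp only [hD]
      rw [← Finset.coe_Ico, Set.ncard_coe_finset, Nat.card_Ico]
      omega
    have hDdisjLv : ∀ a, Disjoint (L₀ v) (D a) := by
      intro a
      rw [Set.disjoint_left]
      intro γ hγ hγD
      simp only [hD, Set.mem_Ico] at hγD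
      have := hLvle γ hγ
      omega
    have hDdisj : ∀ a ∈ A, ∀ a' ∈ A, a ≠ a' → Disjoint (D a) (D a') := by
      have key : ∀ a a' : V, ι a < ι a' → Disjoint (D a) (D a') := by
        intro a a' hlt
        rw [Set.disjoint_left]
        intro x hx hx'
        simp only [hD, Set.mem_Ico] at hx hx'
        have h1 : ι a + 1 ≤ ι a' := hlt
        have h2 : (ι a + 1) * k ≤ ι a' * k := Nat.mul_le_mul_right k h1
        rw [add_mul, one_mul] at h2
        have hP := hx.2
        have hQ := hx'.1
        generalize ι a * k = P at h2 hP hx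
        generalize ι a' * k = Q at h2 hQ hx'
        omega
      intro a ha a' ha' hne
      rcases Nat.lt_or_ge (ι a) (ι a') with h | h
      · exact key a a' h
      · rcases Nat.lt_or_ge (ι a') (ι a) with h2 | h2
        · exact (key a' a h2).symm
        · exact absurd (hιinj ha ha' (le_antisymm h2 h)) hne
    set LA : V → Set ℕ := fun a => if a = v then L₀ v else D a with hLA
    have hLAfin : ∀ a, (LA a).Finite := by
      intro a; simp only [hLA]
      by_cases h : a = v
      · rw [if_pos h]; exact hLvfin
      · rw [if_neg h]; exact hDfin a
    have hLAv : LA v = L₀ v := by simp [hLA]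
    have hLAa : ∀ a ∈ A, LA a = D a := by
      intro a ha; simp only [hLA]; rw [if_neg (fun h : a = v => hvA (h ▸ ha))]
    have hLAcard : ∀ a ∈ A', (LA a).ncard = k := by
      rintro a (hav | ha)
      · rw [hav, hLAv]; exact hLvcard
      · rw [hLAa a ha]; exact hDcard a
    have hLAne : ∀ a ∈ A', (LA a).Nonempty := fun a ha =>
      Set.nonempty_of_ncard_ne_zero (by rw [hLAcard a ha]; omega)
    have hLAdisj : ∀ a ∈ A', ∀ a' ∈ A', a ≠ a' → Disjoint (LA a) (LA a') := by
      rintro a (hav | ha) a' (hav' | ha') hne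
      · exact absurd (hav.trans hav'.symm) hne
      · rw [hav, hLAv, hLAa a' ha']; exact hDdisjLv a'
      · rw [hav', hLAv, hLAa a ha]; exact (hDdisjLv a).symm
      · rw [hLAa a ha, hLAa a' ha']; exact hDdisj a ha a' ha' hne
    obtain ⟨TF, hTFcard, hTFmem⟩ := exists_tuple_finset (k := k) hA'fin.toFinset
      (fun a => (hLAfin a).toFinset) (by
        intro a haf
        rw [← Set.ncard_eq_toFinset_card _ (hLAfin a)]
        exact hLAcard a (hA'fin.mem_toFinset.1 haf))
    have hscard : hA'fin.toFinset.card = k := by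
      rw [← Set.ncard_eq_toFinset_card _ hA'fin]; exact hA'card
    rw [hscard] at hTFcard
    have hTFmem' : ∀ ψ : V → ℕ,
        ψ ∈ TF ↔ (∀ a ∈ A', ψ a ∈ LA a) ∧ ∀ x, x ∉ A' → ψ x = 0 := by
      intro ψ
      rw [hTFmem ψ]
      constructor
      · rintro ⟨h1, h2⟩
        refine ⟨fun a ha => ?_, fun x hx => h2 x (fun h => hx (hA'fin.mem_toFinset.1 h))⟩
        have := h1 a (hA'fin.mem_toFinset.2 ha)
        rwa [Set.Finite.mem_toFinset] at this
      · rintro ⟨h1, h2⟩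
        refine ⟨fun a ha => ?_, fun x hx => h2 x (fun h => hx (hA'fin.mem_toFinset.2 h))⟩
        rw [Set.Finite.mem_toFinset]
        exact h1 a (hA'fin.mem_toFinset.1 ha)
    have htupinj : ∀ ψ ∈ TF, Set.InjOn ψ A' := by
      intro ψ hψ x hx y hy hxy
      by_contra hne
      have h1 := ((hTFmem' ψ).1 hψ).1 x hx
      have h2 := ((hTFmem' ψ).1 hψ).1 y hy
      have := Set.disjoint_left.1 (hLAdisj x hx y hy hne) h1
      rw [← hxy] at h2
      exact this h2
    have himgcard : ∀ ψ ∈ TF, (ψ '' A').ncard = k := by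
      intro ψ hψ
      rw [Set.ncard_image_of_injOn (htupinj ψ hψ), hA'card]
    have htupne : ∀ ψ ∈ TF, ∀ ψ' ∈ TF, ψ '' A' = ψ' '' A' → ψ = ψ' := by
      intro ψ hψ ψ' hψ' himg
      funext x
      by_cases hx : x ∈ A'
      · have h1 := ((hTFmem' ψ).1 hψ).1 x hx
        have h2 : ψ x ∈ ψ' '' A' := by rw [← himg]; exact Set.mem_image_of_mem ψ hx
        obtain ⟨x', hx', heq⟩ := h2
        have h3 := ((hTFmem' ψ').1 hψ').1 x' hx'
        rcases eq_or_ne x' x with rfl | hne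
        · exact heq.symm
        · exfalso
          rw [heq] at h3
          exact Set.disjoint_left.1 (hLAdisj x hx x' hx' (Ne.symm hne)) h1 h3
      · rw [((hTFmem' ψ).1 hψ).2 x hx, ((hTFmem' ψ').1 hψ').2 x hx]
    set φs : V → ℕ := fun x => if x ∈ A' then sInf (LA x) else 0 with hφs
    have hφsTF : φs ∈ TF := by
      rw [hTFmem' φs]
      constructor
      · intro a ha
        rw [hφs]; simp only [if_pos ha]
        exact Nat.sInf_mem (hLAne a ha)
      · intro x hx
        rw [hφs]; simp only [if_neg hx]
    have hcards : hBfin.toFinset.card = (TF.erase φs).card := by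
      rw [Finset.card_erase_of_mem hφsTF, hTFcard,
        ← Set.ncard_eq_toFinset_card _ hBfin, hBcard]
    set e := Finset.equivOfCardEq hcards with he
    set tub : V → (V → ℕ) := fun b =>
      if h : b ∈ hBfin.toFinset then (e ⟨b, h⟩ : {x // x ∈ TF.erase φs}).1 else φs with htub
    have htubmem : ∀ b ∈ B, tub b ∈ TF.erase φs := by
      intro b hb
      rw [htub]
      simp only [dif_pos (hBfin.mem_toFinset.2 hb)]
      exact (e ⟨b, hBfin.mem_toFinset.2 hb⟩).2
    have htubTF : ∀ b ∈ B, tub b ∈ TF := fun b hb => Finset.mem_of_mem_erase (htubmem b hb)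
    have htubne : ∀ b ∈ B, tub b ≠ φs := fun b hb =>
      (Finset.mem_erase.1 (htubmem b hb)).1
    have htubsurj : ∀ ψ ∈ TF.erase φs, ∃ b ∈ B, tub b = ψ := by
      intro ψ hψ
      refine ⟨(e.symm ⟨ψ, hψ⟩).1, hBfin.mem_toFinset.1 (e.symm ⟨ψ, hψ⟩).2, ?_⟩
      rw [htub]
      simp only [dif_pos (e.symm ⟨ψ, hψ⟩).2]
      have : (⟨(e.symm ⟨ψ, hψ⟩).1, (e.symm ⟨ψ, hψ⟩).2⟩ :
          {x // x ∈ hBfin.toFinset}) = e.symm ⟨ψ, hψ⟩ := rfl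
      rw [this, Equiv.apply_symm_apply]
    set R : V → Set ℕ := fun b => tub b '' A' with hR
    have hRfin : ∀ b, (R b).Finite := fun b => hA'fin.image _
    have hRcard : ∀ b ∈ B, (R b).ncard = k := fun b hb => himgcard (tub b) (htubTF b hb)
    set SW : Set V := ⋃ a ∈ A', ⋃ b ∈ B, C a b with hSW
    set pickb : V → V := fun x =>
      if h : ∃ p : V × V, p.1 ∈ A' ∧ p.2 ∈ B ∧ x ∈ C p.1 p.2 then h.choose.2 else v
      with hpickb
    have hpickb_eq : ∀ a ∈ A', ∀ b ∈ B, ∀ x ∈ C a b, pickb x = b := by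
      intro a ha b hb x hx
      have hex : ∃ p : V × V, p.1 ∈ A' ∧ p.2 ∈ B ∧ x ∈ C p.1 p.2 := ⟨(a, b), ha, hb, hx⟩
      rw [hpickb]
      simp only [dif_pos hex]
      obtain ⟨h1, h2, h3⟩ := hex.choose_spec
      by_contra hne
      exact (Set.disjoint_left.1 (hCdisj _ h1 _ h2 a ha b hb (Or.inr hne)) h3) hx
    set L : V → Set ℕ := fun x =>
      if x ∈ A then D x else if x ∈ B then R x else if x ∈ SW then R (pickb x) else L₀ x
      with hLdef
    have hLagree : ∀ u, u ∉ F → L u = L₀ u := by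
      intro u hu
      rw [hFdef] at hu
      have h1 : u ∉ A := fun h => hu (Or.inl (Or.inl h))
      have h2 : u ∉ B := fun h => hu (Or.inl (Or.inr h))
      have h3 : u ∉ SW := fun h => hu (Or.inr h)
      rw [hLdef]
      simp only [if_neg h1, if_neg h2, if_neg h3]
    have hLv : L v = L₀ v := hLagree v hvF
    have hLA' : ∀ a ∈ A', L a = LA a := by
      rintro a (hav | ha)
      · rw [hav, hLv, hLAv]
      · rw [hLAa a ha, hLdef]
        simp only [if_pos ha]
    have hLB : ∀ b ∈ B, L b = R b := by
      intro b hb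
      rw [hLdef]
      simp only [if_neg (fun h => Set.disjoint_left.1 hABdisj h hb), if_pos hb]
    have hLC : ∀ a ∈ A', ∀ b ∈ B, ∀ c ∈ C a b, L c = R b := by
      intro a ha b hb c hc
      have h1 : c ∉ A := fun h => hCnotavb a ha b hb c hc
        (Set.mem_insert_of_mem _ (Or.inl h))
      have h2 : c ∉ B := fun h => hCnotavb a ha b hb c hc
        (Set.mem_insert_of_mem _ (Or.inr h))
      have h3 : c ∈ SW := by
        rw [hSW]; simp only [Set.mem_iUnion]; exact ⟨a, ha, b, hb, hc⟩
      rw [hLdef]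
      simp only [if_neg h1, if_neg h2, if_pos h3, hpickb_eq a ha b hb c hc]
    have hLassign : IsListAssignment L k := by
      intro x
      by_cases h1 : x ∈ A
      · rw [hLdef]; simp only [if_pos h1]; exact ⟨hDfin x, hDcard x⟩
      by_cases h2 : x ∈ B
      · rw [hLB x h2]; exact ⟨hRfin x, hRcard x h2⟩
      by_cases h3 : x ∈ SW
      · have h3' := h3
        rw [hSW] at h3'; simp only [Set.mem_iUnion] at h3'
        obtain ⟨a, ha, b, hb, hc⟩ := h3'
        rw [hLC a ha b hb x hc]
        exact ⟨hRfin b, hRcard b hb⟩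
      · have : x ∉ F := by
          rw [hFdef]
          rintro ((h | h) | h)
          exacts [h1 h, h2 h, h3 h]
        rw [hLdef]; simp only [if_neg h1, if_neg h2, if_neg h3]
        exact hL₀ x this
    -- the good-tuple hypothesis for φs
    have hφsmem : ∀ a ∈ A', φs a ∈ L a := by
      intro a ha
      rw [hLA' a ha, hφs]
      simp only [if_pos ha]
      exact Nat.sInf_mem (hLAne a ha)
    have hgood : ∀ b ∈ B, ∃ γ ∈ L b, ∀ a ∈ A',
        ∃ σ : V → ℕ, Set.InjOn σ (C a b) ∧ (∀ c ∈ C a b, σ c ∈ L c) ∧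
          (φs a = γ → ∀ c ∈ C a b, σ c ≠ γ) := by
      intro b hb
      have hneq : tub b '' A' ≠ φs '' A' := by
        intro h
        exact htubne b hb (htupne (tub b) (htubTF b hb) φs hφsTF h)
      have hout : ∃ γ ∈ tub b '' A', γ ∉ φs '' A' := by
        by_contra hcon
        push_neg at hcon
        exact hneq (Set.eq_of_subset_of_ncard_le hcon
          (by rw [himgcard (tub b) (htubTF b hb), himgcard φs hφsTF])
          (hA'fin.image φs))
      obtain ⟨γ, hγR, hγout⟩ := hout
      refine ⟨γ, by rw [hLB b hb, hR]; exact hγR, ?_⟩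
      intro a ha
      obtain ⟨σ, hσ1, hσ2⟩ := exists_sdr (L := L) (hCfin a ha b hb)
        (le_of_eq (hCcard a ha b hb))
        (fun c hc => by
          rw [hLC a ha b hb c hc]
          exact ⟨hRfin b, le_of_eq (hRcard b hb).symm⟩)
      refine ⟨σ, hσ1, hσ2, fun hcon => ?_⟩
      exact absurd (hcon ▸ Set.mem_image_of_mem φs ha) hγout
    have hadm := admissible_of_tuple G k hk v A B C F hAleafed hBleafed hvB hABdisj hBne
      hsw hCdisj hCav hFdef L hLassign φs hφsmem hgood
    have hCF : ∀ a ∈ A', ∀ b ∈ B, ∀ c ∈ C a b, c ∈ F := by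
      intro a ha b hb c hc
      rw [hFdef]
      right
      simp only [hSW, Set.mem_iUnion]
      exact ⟨a, ha, b, hb, hc⟩
    refine ⟨L, hLassign, hLagree, φs v, hadm, ?_⟩
    -- uniqueness
    intro c' hc'
    by_contra hcne
    obtain ⟨hc'Lv, ρ, hρcol, hρv, hρstar⟩ := hc'
    set ψ : V → ℕ := fun x => if x ∈ A' then ρ x else 0 with hψd
    have hψTF : ψ ∈ TF := by
      rw [hTFmem' ψ]
      constructor
      · intro a ha
        rw [hψd]; simp only [if_pos ha]
        have := hρcol a
        rwa [hLA' a ha] at this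
      · intro x hx
        rw [hψd]; simp only [if_neg hx]
    have hψv : ψ v = c' := by
      rw [hψd]; simp only [if_pos hvA']; exact hρv
    have hψne : ψ ≠ φs := by
      intro h
      apply hcne
      rw [← hψv, h]
    have hψerase : ψ ∈ TF.erase φs := Finset.mem_erase.2 ⟨hψne, hψTF⟩
    obtain ⟨b, hb, htubψ⟩ := htubsurj ψ hψerase
    have hρbR : ρ b ∈ ψ '' A' := by
      have := hρcol b
      rw [hLB b hb] at this
      simp only [hR] at this
      rw [htubψ] at this
      exact this
    obtain ⟨a, ha, hψa⟩ := hρbR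
    have hρa : ρ a = ρ b := by
      rw [← hψa, hψd]; simp only [if_pos ha]
    by_cases hinj : Set.InjOn ρ (C a b)
    · have hsub : ρ '' C a b ⊆ R b := by
        rintro y ⟨c, hc, rfl⟩
        have := hρcol c
        rwa [hLC a ha b hb c hc] at this
      have himg : ρ '' C a b = R b :=
        Set.eq_of_subset_of_ncard_le hsub
          (by rw [hRcard b hb, Set.ncard_image_of_injOn hinj, hCcard a ha b hb])
          (hRfin b)
      have hmem : ρ a ∈ ρ '' C a b := by
        rw [himg]
        simp only [hR]
        rw [htubψ, hρa, ← hψa]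
        exact Set.mem_image_of_mem ψ ha
      obtain ⟨c, hcC, hρc⟩ := hmem
      have hmt := sw_maxStar_triple (hne_ab a ha b hb) (hsw a ha b hb).1
        (hCd a ha b hb) (hca a ha b hb) (hcb a ha b hb) (hclo a ha b hb) hcC
      apply hρstar c (hCF a ha b hb c hcC) {c, a, b} hmt.1 hmt.2
      have hval : ∀ w ∈ ({c, a, b} : Set V), ρ w = ρ a := by
        rintro w (rfl | rfl | rfl)
        exacts [hρc, rfl, hρa.symm]
      intro x hx y hy
      rw [hval x hx, hval y hy]
    · rw [Set.InjOn] at hinj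
      push_neg at hinj
      obtain ⟨c, hcC, c', hc'C, hρcc, hccne⟩ := hinj
      have hmp := sw_maxStar_pair (hCd a ha b hb) (hca a ha b hb) (hcb a ha b hb)
        (hclo a ha b hb) hcC hc'C (Ne.symm hccne)
      apply hρstar c (hCF a ha b hb c hcC) {c, c'} hmp.1 hmp.2
      have hval : ∀ w ∈ ({c, c'} : Set V), ρ w = ρ c := by
        rintro w (rfl | rfl)
        exacts [rfl, hρcc.symm]
      intro x hx y hy
      rw [hval x hx, hval y hy]
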